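/- arXiv:1711.04918 — 3 statements merged into one kernel-verified Lean document; each statement's English description precedes it below -/
import Mathlib

section
/- Let 0 < p < ∞ and f ∈ L^p(ℝ^n). For every ε > 0 there exists a function Q in the class 𝒜 such that ∫_{ℝ^n} |Q(x) − f(x)|^p dx < ε; that is, 𝒜 ∩ L^p(ℝ^n) is dense in L^p(ℝ^n) with respect to the metric d(f,g) = ∫ |f−g|^p dx when p ≤ 1 (equivalently, with respect to the L^p norm when p ≥ 1). -/
open MeasureTheory Complex Filter
open scoped ENNReal NNReal Topology

noncomputable section

/-- The point of `ℂ^n` with real part `x` and imaginary part `y`. -/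
def cpt (n : ℕ) (x y : Fin n → ℝ) : Fin n → ℂ := fun j => (x j : ℂ) + (y j : ℂ) * Complex.I

/-- The canonical embedding of `ℝ^n` into `ℂ^n`. -/
def rpt (n : ℕ) (x : Fin n → ℝ) : Fin n → ℂ := fun j => (x j : ℂ)

/-- The tube over a base `B ⊆ ℝ^n`. -/
def tube (n : ℕ) (B : Set (Fin n → ℝ)) : Set (Fin n → ℂ) :=
  {z | (fun j => (z j).im) ∈ B}

/-- The real sign attached to a boolean. -/
def sgnv (b : Bool) : ℝ := if b then 1 else -1

/-- The open octant of `ℝ^n` determined by a sign vector `σ`. -/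
def octant (n : ℕ) (σ : Fin n → Bool) : Set (Fin n → ℝ) :=
  {y | ∀ j, 0 < sgnv (σ j) * y j}

/-- The first octant `(0,∞)^n`. -/
def firstOct (n : ℕ) : Set (Fin n → ℝ) := {y | ∀ j, 0 < y j}

/-- The `p`-th power Hardy quasinorm `sup_{y ∈ B} ∫_{ℝ^n} |F(x+iy)|^p dx`. -/
def hNorm (n : ℕ) (p : ℝ) (B : Set (Fin n → ℝ)) (F : (Fin n → ℂ) → ℂ) : ℝ≥0∞ :=
  ⨆ y ∈ B, ∫⁻ x : Fin n → ℝ, (‖F (cpt n x y)‖₊ : ℝ≥0∞) ^ p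

/-- Membership in the Hardy space `H^p(T_B)`. -/
def MemHp (n : ℕ) (p : ℝ) (B : Set (Fin n → ℝ)) (F : (Fin n → ℂ) → ℂ) : Prop :=
  DifferentiableOn ℂ F (tube n B) ∧ hNorm n p B F < ⊤

/-- The `p`-th power `L^p` quasinorm `∫_{ℝ^n} |f|^p dx`. -/
def lpNorm (n : ℕ) (p : ℝ) (f : (Fin n → ℝ) → ℂ) : ℝ≥0∞ :=
  ∫⁻ x : Fin n → ℝ, (‖f x‖₊ : ℝ≥0∞) ^ p

/-- Membership in `L^p(ℝ^n)` (for `0 < p`, as a quasinormed space). -/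
def MemLp' (n : ℕ) (p : ℝ) (f : (Fin n → ℝ) → ℂ) : Prop :=
  AEMeasurable f volume ∧ lpNorm n p f < ⊤

/-- `F` has non-tangential boundary limit `L` at `x₀ ∈ ℝ^n`, within the tube over the
octant determined by `σ`. -/
def NTBLAt (n : ℕ) (σ : Fin n → Bool) (F : (Fin n → ℂ) → ℂ) (x₀ : Fin n → ℝ) (L : ℂ) : Prop :=
  ∀ α : Fin n → ℝ, (∀ j, 0 < α j) →
    Tendsto F (nhdsWithin (rpt n x₀)
      {z | z ∈ tube n (octant n σ) ∧ ∀ j, |(z j).re - x₀ j| < α j * |(z j).im|})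
      (nhds L)

/-- `R` is a rational function on `ℂ^n`: a quotient of two polynomials in `n` variables. -/
def IsRat (n : ℕ) (R : (Fin n → ℂ) → ℂ) : Prop :=
  ∃ P Q : MvPolynomial (Fin n) ℂ, Q ≠ 0 ∧
    ∀ z, MvPolynomial.eval z Q ≠ 0 → R z = MvPolynomial.eval z P / MvPolynomial.eval z Q

/-- `f ∈ H^p_σ(ℝ^n)`: `f` is the a.e. non-tangential boundary limit of some
`H^p(T_{Γ_σ})` function. -/
def HpBdry (n : ℕ) (p : ℝ) (σ : Fin n → Bool) (f : (Fin n → ℝ) → ℂ) : Prop :=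
  ∃ F, MemHp n p (octant n σ) F ∧
    ∀ᵐ x ∂(volume : Measure (Fin n → ℝ)), NTBLAt n σ F x (f x)

/-- The class `𝒜` of rational functions `P(x)/∏ (1+x_j²)^{l_j}` with `deg_j P < 2 l_j`. -/
def memA (n : ℕ) (R : (Fin n → ℝ) → ℂ) : Prop :=
  ∃ (P : MvPolynomial (Fin n) ℂ) (l : Fin n → ℕ),
    (∀ j, P.degreeOf j < 2 * l j) ∧
    ∀ x, R x = MvPolynomial.eval (fun j => (x j : ℂ)) P / ∏ j, (1 + (x j : ℂ) ^ 2) ^ (l j)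

namespace St7

lemma wC_ne_zero (t : ℝ) : (1 + (t:ℂ)^2) ≠ 0 := by
  have h : (1 + (t:ℂ)^2) = ((1 + t^2 : ℝ) : ℂ) := by push_cast; ring
  rw [h]; exact_mod_cast (by positivity : (1+t^2:ℝ) ≠ 0)

lemma prod_wC_ne_zero {n : ℕ} (x : Fin n → ℝ) (l : ℕ) :
    (∏ j, (1 + ((x j):ℂ)^2)^l) ≠ 0 :=
  Finset.prod_ne_zero_iff.mpr fun j _ => pow_ne_zero _ (wC_ne_zero (x j))

lemma degreeOf_one' {n : ℕ} (i : Fin n) :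
    MvPolynomial.degreeOf i (1 : MvPolynomial (Fin n) ℂ) = 0 := by
  simpa using MvPolynomial.degreeOf_C (1:ℂ) i

/-- auxiliary class: `P/∏(1+x_j^2)^l` with `deg_j P ≤ 2l`. -/
def DD (n : ℕ) (R : (Fin n → ℝ) → ℂ) : Prop :=
  ∃ (P : MvPolynomial (Fin n) ℂ) (l : ℕ),
    (∀ j, P.degreeOf j ≤ 2 * l) ∧
    ∀ x : Fin n → ℝ,
      R x * ∏ j, (1 + ((x j):ℂ)^2)^l = MvPolynomial.eval (fun j => ((x j : ℝ):ℂ)) P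

/-- the polynomial `∏_j (1+X_j^2)`. -/
def Bpoly (n : ℕ) : MvPolynomial (Fin n) ℂ := ∏ j, (1 + MvPolynomial.X j ^ 2)

lemma degreeOf_X_sq {n : ℕ} (i j : Fin n) :
    MvPolynomial.degreeOf i ((MvPolynomial.X j : MvPolynomial (Fin n) ℂ) ^ 2) ≤ 2 := by
  refine le_trans (MvPolynomial.degreeOf_pow_le _ _ _) ?_
  rw [MvPolynomial.degreeOf_X]
  split <;> omega

lemma degreeOf_X_sq_ne {n : ℕ} {i j : Fin n} (h : i ≠ j) :
    MvPolynomial.degreeOf i ((MvPolynomial.X j : MvPolynomial (Fin n) ℂ) ^ 2) = 0 := by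
  refine Nat.le_zero.mp (le_trans (MvPolynomial.degreeOf_pow_le _ _ _) ?_)
  rw [MvPolynomial.degreeOf_X, if_neg h]

lemma degreeOf_one_add_X_sq {n : ℕ} (i j : Fin n) :
    MvPolynomial.degreeOf i (1 + MvPolynomial.X j ^ 2 : MvPolynomial (Fin n) ℂ) ≤ 2 := by
  refine le_trans (MvPolynomial.degreeOf_add_le _ _ _) (max_le ?_ (degreeOf_X_sq i j))
  rw [degreeOf_one']; omega

lemma degreeOf_one_add_X_sq_ne {n : ℕ} {i j : Fin n} (h : i ≠ j) :
    MvPolynomial.degreeOf i (1 + MvPolynomial.X j ^ 2 : MvPolynomial (Fin n) ℂ) = 0 := by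
  refine Nat.le_zero.mp (le_trans (MvPolynomial.degreeOf_add_le _ _ _) (max_le ?_ ?_))
  · rw [degreeOf_one']
  · rw [degreeOf_X_sq_ne h]

lemma degreeOf_prod_erase_zero {n : ℕ} (i : Fin n) :
    MvPolynomial.degreeOf i
      (∏ k ∈ Finset.univ.erase i, (1 + MvPolynomial.X k ^ 2 : MvPolynomial (Fin n) ℂ)) = 0 := by
  refine Nat.le_zero.mp (le_trans (MvPolynomial.degreeOf_prod_le _ _ _) ?_)
  refine le_trans (Finset.sum_le_sum fun k hk =>
    (degreeOf_one_add_X_sq_ne (Finset.ne_of_mem_erase hk).symm).le) ?_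
  simp

lemma degreeOf_prod_one_add_sq {n : ℕ} (s : Finset (Fin n)) (i : Fin n) :
    MvPolynomial.degreeOf i (∏ k ∈ s, (1 + MvPolynomial.X k ^ 2 : MvPolynomial (Fin n) ℂ)) ≤ 2 := by
  refine le_trans (MvPolynomial.degreeOf_prod_le _ _ _) ?_
  calc ∑ k ∈ s, MvPolynomial.degreeOf i (1 + MvPolynomial.X k ^ 2 : MvPolynomial (Fin n) ℂ)
      ≤ ∑ k ∈ s, (if i = k then 2 else 0) := by
        refine Finset.sum_le_sum fun k _ => ?_
        rcases eq_or_ne i k with rfl | h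
        · simpa using degreeOf_one_add_X_sq i i
        · simp [degreeOf_one_add_X_sq_ne h]
    _ ≤ 2 := by
        rcases Finset.decidableMem i s with h | h
        · simp [Finset.sum_ite_eq', h]
        · simp [Finset.sum_ite_eq', h]

lemma degreeOf_Bpoly_pow {n : ℕ} (j : Fin n) (e : ℕ) :
    ((Bpoly n) ^ e).degreeOf j ≤ 2 * e := by
  refine le_trans (MvPolynomial.degreeOf_pow_le _ _ _) ?_
  calc e * (Bpoly n).degreeOf j ≤ e * 2 :=
        Nat.mul_le_mul_left _ (degreeOf_prod_one_add_sq Finset.univ j)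
  _ = 2 * e := Nat.mul_comm _ _

lemma eval_Bpoly {n : ℕ} (x : Fin n → ℝ) :
    MvPolynomial.eval (fun j => ((x j : ℝ):ℂ)) (Bpoly n) = ∏ j, (1 + ((x j):ℂ)^2) := by
  simp [Bpoly]

lemma prod_pow_add {n : ℕ} (x : Fin n → ℝ) (a b : ℕ) :
    (∏ j, (1 + ((x j):ℂ)^2)^(a+b)) =
      (∏ j, (1 + ((x j):ℂ)^2)^a) * (∏ j, (1 + ((x j):ℂ)^2)^b) := by
  rw [← Finset.prod_mul_distrib]
  exact Finset.prod_congr rfl fun j _ => pow_add _ _ _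

lemma DD_const {n : ℕ} (c : ℂ) : DD n (fun _ => c) :=
  ⟨MvPolynomial.C c, 0, fun j => by simp, fun x => by simp⟩

lemma DD_add {n : ℕ} {R S : (Fin n → ℝ) → ℂ} (hR : DD n R) (hS : DD n S) :
    DD n (fun x => R x + S x) := by
  obtain ⟨P, l, hPd, hP⟩ := hR
  obtain ⟨Q, m, hQd, hQ⟩ := hS
  refine ⟨P * (Bpoly n) ^ m + Q * (Bpoly n) ^ l, l + m, fun j => ?_, fun x => ?_⟩
  · refine le_trans (MvPolynomial.degreeOf_add_le _ _ _) (max_le ?_ ?_)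
    · refine le_trans (MvPolynomial.degreeOf_mul_le _ _ _) ?_
      have h1 := degreeOf_Bpoly_pow (n := n) j m
      have h2 := hPd j
      omega
    · refine le_trans (MvPolynomial.degreeOf_mul_le _ _ _) ?_
      have h1 := degreeOf_Bpoly_pow (n := n) j l
      have h2 := hQd j
      omega
  · have e1 := hP x
    have e2 := hQ x
    have hpowprod : ∀ a : ℕ, (∏ j, (1 + ((x j):ℂ)^2))^a = ∏ j, (1 + ((x j):ℂ)^2)^a :=
      fun a => (Finset.prod_pow _ _ _).symm
    simp only [map_add, map_mul, map_pow, eval_Bpoly, ← e1, ← e2]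
    rw [add_mul, prod_pow_add, hpowprod, hpowprod]
    ring

lemma DD_mul {n : ℕ} {R S : (Fin n → ℝ) → ℂ} (hR : DD n R) (hS : DD n S) :
    DD n (fun x => R x * S x) := by
  obtain ⟨P, l, hPd, hP⟩ := hR
  obtain ⟨Q, m, hQd, hQ⟩ := hS
  refine ⟨P * Q, l + m, fun j => ?_, fun x => ?_⟩
  · refine le_trans (MvPolynomial.degreeOf_mul_le _ _ _) ?_
    have h1 := hPd j; have h2 := hQd j; omega
  · have e1 := hP x
    have e2 := hQ x
    simp only [map_mul, ← e1, ← e2]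
    rw [prod_pow_add]; ring

lemma DD_cgen {n : ℕ} (j : Fin n) :
    DD n (fun x => (((1 - (x j)^2)/(1 + (x j)^2) : ℝ) : ℂ)) := by
  refine ⟨(1 - MvPolynomial.X j ^ 2) * ∏ k ∈ Finset.univ.erase j, (1 + MvPolynomial.X k ^ 2),
    1, fun i => ?_, fun x => ?_⟩
  · refine le_trans (MvPolynomial.degreeOf_mul_le _ _ _) ?_
    rcases eq_or_ne i j with rfl | hne
    · have h1 : MvPolynomial.degreeOf i (1 - MvPolynomial.X i ^ 2 : MvPolynomial (Fin n) ℂ) ≤ 2 := by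
        refine le_trans (MvPolynomial.degreeOf_sub_le _ _ _) (max_le ?_ (degreeOf_X_sq i i))
        rw [degreeOf_one']; omega
      have h2 := degreeOf_prod_erase_zero (n := n) i
      omega
    · have h1 : MvPolynomial.degreeOf i (1 - MvPolynomial.X j ^ 2 : MvPolynomial (Fin n) ℂ) = 0 := by
        refine Nat.le_zero.mp (le_trans (MvPolynomial.degreeOf_sub_le _ _ _) (max_le ?_ ?_))
        · rw [degreeOf_one']
        · rw [degreeOf_X_sq_ne hne]
      have h2 := degreeOf_prod_one_add_sq (Finset.univ.erase j) i
      omega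
  · have hcast : (((1 - (x j)^2)/(1 + (x j)^2) : ℝ) : ℂ)
        = (1 - ((x j):ℂ)^2) / (1 + ((x j):ℂ)^2) := by push_cast; ring
    have hsplit : (∏ k, (1 + ((x k):ℂ)^2)^1) =
        (1 + ((x j):ℂ)^2) * ∏ k ∈ Finset.univ.erase j, (1 + ((x k):ℂ)^2) := by
      simp only [pow_one]
      exact (Finset.mul_prod_erase Finset.univ _ (Finset.mem_univ j)).symm
    show (((1 - (x j)^2)/(1 + (x j)^2) : ℝ) : ℂ) * (∏ k, (1 + ((x k):ℂ)^2)^1) = _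
    rw [hcast, hsplit, ← mul_assoc, div_mul_cancel₀ _ (wC_ne_zero (x j))]
    simp [MvPolynomial.eval_prod, mul_comm]

lemma DD_sgen {n : ℕ} (j : Fin n) :
    DD n (fun x => (((2 * x j)/(1 + (x j)^2) : ℝ) : ℂ)) := by
  refine ⟨(2 * MvPolynomial.X j) * ∏ k ∈ Finset.univ.erase j, (1 + MvPolynomial.X k ^ 2),
    1, fun i => ?_, fun x => ?_⟩
  · refine le_trans (MvPolynomial.degreeOf_mul_le _ _ _) ?_
    rcases eq_or_ne i j with rfl | hne
    · have h1 : MvPolynomial.degreeOf i (2 * MvPolynomial.X i : MvPolynomial (Fin n) ℂ) ≤ 2 := by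
        rw [two_mul]
        refine le_trans (MvPolynomial.degreeOf_add_le _ _ _) ?_
        rw [MvPolynomial.degreeOf_X]
        split <;> omega
      have h2 := degreeOf_prod_erase_zero (n := n) i
      omega
    · have h1 : MvPolynomial.degreeOf i (2 * MvPolynomial.X j : MvPolynomial (Fin n) ℂ) = 0 := by
        rw [two_mul]
        refine Nat.le_zero.mp (le_trans (MvPolynomial.degreeOf_add_le _ _ _) ?_)
        rw [MvPolynomial.degreeOf_X, if_neg hne]
        omega
      have h2 := degreeOf_prod_one_add_sq (Finset.univ.erase j) i
      omega
  · have hcast : (((2 * x j)/(1 + (x j)^2) : ℝ) : ℂ)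
        = (2 * ((x j):ℂ)) / (1 + ((x j):ℂ)^2) := by push_cast; ring
    have hsplit : (∏ k, (1 + ((x k):ℂ)^2)^1) =
        (1 + ((x j):ℂ)^2) * ∏ k ∈ Finset.univ.erase j, (1 + ((x k):ℂ)^2) := by
      simp only [pow_one]
      exact (Finset.mul_prod_erase Finset.univ _ (Finset.mem_univ j)).symm
    show (((2 * x j)/(1 + (x j)^2) : ℝ) : ℂ) * (∏ k, (1 + ((x k):ℂ)^2)^1) = _
    rw [hcast, hsplit, ← mul_assoc, div_mul_cancel₀ _ (wC_ne_zero (x j))]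
    simp [MvPolynomial.eval_prod, mul_comm]




/-- Cayley-type map to (the product of) circles. -/
def Phi (n : ℕ) (x : Fin n → ℝ) : Fin n → ℝ × ℝ :=
  fun j => ((1 - (x j)^2)/(1 + (x j)^2), (2 * x j)/(1 + (x j)^2))

def Kset (n : ℕ) : Set (Fin n → ℝ × ℝ) := Metric.closedBall 0 1

lemma wpos (t : ℝ) : (0:ℝ) < 1 + t^2 := by positivity

lemma Phi_mem_K (n : ℕ) (x : Fin n → ℝ) : Phi n x ∈ Kset n := by
  rw [Kset, Metric.mem_closedBall, dist_zero_right]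
  refine pi_norm_le_iff_of_nonneg (by norm_num) |>.mpr fun j => ?_
  rw [Prod.norm_def]
  refine max_le ?_ ?_
  · show ‖(1 - (x j)^2)/(1 + (x j)^2)‖ ≤ 1
    rw [Real.norm_eq_abs, abs_div, abs_of_pos (wpos (x j)), div_le_one (wpos (x j))]
    rw [abs_le]; constructor <;> nlinarith [sq_nonneg (x j)]
  · show ‖(2 * x j)/(1 + (x j)^2)‖ ≤ 1
    rw [Real.norm_eq_abs, abs_div, abs_of_pos (wpos (x j)), div_le_one (wpos (x j))]
    rw [abs_le]; constructor <;> nlinarith [sq_nonneg (x j - 1), sq_nonneg (x j + 1)]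

instance KcompactSpace (n : ℕ) : CompactSpace (Kset n) :=
  isCompact_iff_compactSpace.mp (isCompact_closedBall _ _)

def coordFst (n : ℕ) (j : Fin n) : C(Kset n, ℝ) :=
  ⟨fun ζ => ((ζ : Fin n → ℝ × ℝ) j).1,
    continuous_fst.comp ((continuous_apply j).comp continuous_subtype_val)⟩

def coordSnd (n : ℕ) (j : Fin n) : C(Kset n, ℝ) :=
  ⟨fun ζ => ((ζ : Fin n → ℝ × ℝ) j).2,
    continuous_snd.comp ((continuous_apply j).comp continuous_subtype_val)⟩

def Aset (n : ℕ) : Set C(Kset n, ℝ) := Set.range (coordFst n) ∪ Set.range (coordSnd n)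

def Aalg (n : ℕ) : Subalgebra ℝ C(Kset n, ℝ) := Algebra.adjoin ℝ (Aset n)

lemma Aalg_separates (n : ℕ) : (Aalg n).SeparatesPoints := by
  intro ζ η hne
  have h1 : (ζ : Fin n → ℝ × ℝ) ≠ (η : Fin n → ℝ × ℝ) := fun h => hne (Subtype.ext h)
  rw [Function.ne_iff] at h1
  obtain ⟨j, hj⟩ := h1
  have hor : ((ζ:Fin n → ℝ×ℝ) j).1 ≠ ((η:Fin n → ℝ×ℝ) j).1 ∨
      ((ζ:Fin n → ℝ×ℝ) j).2 ≠ ((η:Fin n → ℝ×ℝ) j).2 := by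
    by_contra h
    push_neg at h
    exact hj (Prod.ext h.1 h.2)
  rcases hor with h | h
  · exact ⟨_, ⟨coordFst n j, Algebra.subset_adjoin (Or.inl ⟨j, rfl⟩), rfl⟩, h⟩
  · exact ⟨_, ⟨coordSnd n j, Algebra.subset_adjoin (Or.inr ⟨j, rfl⟩), rfl⟩, h⟩



lemma DD_of_adjoin {n : ℕ} (a : C(Kset n, ℝ)) (ha : a ∈ Aalg n) :
    DD n (fun x => ((a ⟨Phi n x, Phi_mem_K n x⟩ : ℝ) : ℂ)) := by
  induction ha using Algebra.adjoin_induction with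
  | mem b hb =>
      rcases hb with ⟨j, rfl⟩ | ⟨j, rfl⟩
      · exact DD_cgen j
      · exact DD_sgen j
  | algebraMap r =>
      exact DD_const ((r:ℝ):ℂ)
  | add b c hb hc ihb ihc =>
      convert DD_add ihb ihc using 1
      funext x
      push_cast [ContinuousMap.add_apply]
      ring
  | mul b c hb hc ihb ihc =>
      convert DD_mul ihb ihc using 1
      funext x
      push_cast [ContinuousMap.mul_apply]
      ring


def xmap (n : ℕ) (γ : ℝ) (ζ : Fin n → ℝ × ℝ) : Fin n → ℝ :=
  fun j => (ζ j).2 / max (1 + (ζ j).1) γ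

def cutF (γ u : ℝ) : ℝ := min 1 (max 0 ((u - γ)/γ))

def Gfun (n m : ℕ) (γ : ℝ) (g : (Fin n → ℝ) → ℂ) (ζ : Fin n → ℝ × ℝ) : ℂ :=
  ((∏ j, cutF γ (1 + (ζ j).1) : ℝ) : ℂ) * g (xmap n γ ζ) *
    ((∏ j, (2 / max (1 + (ζ j).1) γ)^m : ℝ) : ℂ)

lemma max_pos {n : ℕ} {γ : ℝ} (hγ : 0 < γ) (ζ : Fin n → ℝ × ℝ) (j : Fin n) :
    max (1 + (ζ j).1) γ ≠ 0 :=
  (lt_of_lt_of_le hγ (le_max_right _ _)).ne'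

lemma continuous_den {n : ℕ} (j : Fin n) :
    Continuous (fun ζ : Fin n → ℝ × ℝ => (1 + (ζ j).1)) :=
  continuous_const.add (continuous_fst.comp (continuous_apply j))

lemma continuous_xmap {n : ℕ} {γ : ℝ} (hγ : 0 < γ) : Continuous (xmap n γ) := by
  refine continuous_pi fun j => ?_
  exact (continuous_snd.comp (continuous_apply j)).div
    ((continuous_den j).max continuous_const) (max_pos hγ · j)

lemma continuous_Gfun {n m : ℕ} {γ : ℝ} (hγ : 0 < γ) {g : (Fin n → ℝ) → ℂ}
    (hg : Continuous g) : Continuous (Gfun n m γ g) := by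
  have h1 : Continuous fun ζ : Fin n → ℝ × ℝ => (∏ j, cutF γ (1 + (ζ j).1) : ℝ) := by
    refine continuous_finset_prod _ fun j _ => ?_
    exact continuous_const.min (continuous_const.max
      (((continuous_den j).sub continuous_const).div_const γ))
  have h2 : Continuous fun ζ : Fin n → ℝ × ℝ => (∏ j, (2 / max (1 + (ζ j).1) γ)^m : ℝ) := by
    refine continuous_finset_prod _ fun j _ => ?_
    exact (continuous_const.div ((continuous_den j).max continuous_const) (max_pos hγ · j)).pow m
  exact ((Complex.continuous_ofReal.comp h1).mul (hg.comp (continuous_xmap hγ))).mul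
    (Complex.continuous_ofReal.comp h2)

lemma one_add_Phi_fst {n : ℕ} (x : Fin n → ℝ) (j : Fin n) :
    1 + (Phi n x j).1 = 2 / (1 + (x j)^2) := by
  show 1 + (1 - (x j)^2)/(1 + (x j)^2) = 2 / (1 + (x j)^2)
  field_simp
  ring

lemma Gfun_Phi {n m : ℕ} {g : (Fin n → ℝ) → ℂ} {R : ℝ} (hR : 0 ≤ R)
    (hzero : ∀ y : Fin n → ℝ, (∃ j, R < |y j|) → g y = 0) (x : Fin n → ℝ) :
    Gfun n m (1 + R^2)⁻¹ g (Phi n x) = g x * ((∏ j, (1 + (x j)^2)^m : ℝ) : ℂ) := by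
  set γ : ℝ := (1 + R^2)⁻¹ with hγdef
  have hγ : 0 < γ := by positivity
  have habs : ∀ j : Fin n, R^2 < (x j)^2 → R < |x j| := by
    intro j h
    have : R^2 < |x j|^2 := by rwa [_root_.sq_abs]
    exact lt_of_pow_lt_pow_left₀ 2 (abs_nonneg _) this
  by_cases hall : ∀ j, (x j)^2 ≤ R^2
  · -- all coordinates small
    have hu : ∀ j : Fin n, 2*γ ≤ 1 + (Phi n x j).1 := by
      intro j
      rw [one_add_Phi_fst]
      rw [hγdef]
      rw [show (2 : ℝ)*(1+R^2)⁻¹ = 2/(1+R^2) by ring]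
      rw [div_le_div_iff₀ (by positivity) (wpos (x j))]
      nlinarith [hall j]
    have hmax : ∀ j : Fin n, max (1 + (Phi n x j).1) γ = 1 + (Phi n x j).1 := by
      intro j
      exact max_eq_left (le_trans (by linarith [hγ]) (hu j))
    have hxmap : xmap n γ (Phi n x) = x := by
      funext j
      show (Phi n x j).2 / max (1 + (Phi n x j).1) γ = x j
      rw [hmax j, one_add_Phi_fst]
      show ((2 * x j)/(1 + (x j)^2)) / (2 / (1 + (x j)^2)) = x j
      field_simp
    have hcut : ∀ j : Fin n, cutF γ (1 + (Phi n x j).1) = 1 := by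
      intro j
      have h1 : (1:ℝ) ≤ ((1 + (Phi n x j).1) - γ)/γ := by
        rw [le_div_iff₀ hγ]
        linarith [hu j]
      rw [cutF, max_eq_right (le_trans zero_le_one h1), min_eq_left h1]
    have hw : ∀ j : Fin n, (2 / max (1 + (Phi n x j).1) γ) = 1 + (x j)^2 := by
      intro j
      rw [hmax j, one_add_Phi_fst]
      rw [div_div_eq_mul_div, mul_comm]
      field_simp
    rw [Gfun, hxmap]
    simp only [hcut, hw, Finset.prod_const_one]
    push_cast
    ring
  · -- some coordinate is large
    push_neg at hall
    obtain ⟨j0, hj0⟩ := hall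
    have hgx : g x = 0 := hzero x ⟨j0, habs j0 hj0⟩
    rw [hgx, zero_mul]
    have hu0 : 1 + (Phi n x j0).1 < 2*γ := by
      rw [one_add_Phi_fst, hγdef, show (2 : ℝ)*(1+R^2)⁻¹ = 2/(1+R^2) by ring]
      rw [div_lt_div_iff₀ (wpos (x j0)) (by positivity)]
      nlinarith
    by_cases hu : 1 + (Phi n x j0).1 ≤ γ
    · have hcut0 : cutF γ (1 + (Phi n x j0).1) = 0 := by
        have h1 : ((1 + (Phi n x j0).1) - γ)/γ ≤ 0 :=
          div_nonpos_of_nonpos_of_nonneg (by linarith) hγ.le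
        rw [cutF, max_eq_left h1, min_eq_right zero_le_one]
      rw [Gfun, Finset.prod_eq_zero (Finset.mem_univ j0) hcut0]
      push_cast
      ring
    · push_neg at hu
      have hmax0 : max (1 + (Phi n x j0).1) γ = 1 + (Phi n x j0).1 := max_eq_left hu.le
      have hxm : xmap n γ (Phi n x) j0 = x j0 := by
        show (Phi n x j0).2 / max (1 + (Phi n x j0).1) γ = x j0
        rw [hmax0, one_add_Phi_fst]
        show ((2 * x j0)/(1 + (x j0)^2)) / (2 / (1 + (x j0)^2)) = x j0
        field_simp
      have : g (xmap n γ (Phi n x)) = 0 := by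
        refine hzero _ ⟨j0, ?_⟩
        rw [hxm]
        exact habs j0 hj0
      rw [Gfun, this]
      ring

/-- dividing a `DD` function by `∏ (1+x_j^2)^m`, `m ≥ 1`, gives an element of `𝒜`-shape:
numerator `P`, exponents `l+m`, strict degree bound. -/
lemma DD_div_form {n m : ℕ} (hm : 1 ≤ m) {F : (Fin n → ℝ) → ℂ} (hF : DD n F) :
    ∃ (P : MvPolynomial (Fin n) ℂ) (L : Fin n → ℕ),
      (∀ j, P.degreeOf j < 2 * L j) ∧
      ∀ x : Fin n → ℝ, F x / (∏ j, (1 + ((x j):ℂ)^2)^m)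
        = MvPolynomial.eval (fun j => ((x j : ℝ):ℂ)) P / ∏ j, (1 + ((x j):ℂ)^2)^(L j) := by
  obtain ⟨P, l, hd, hEq⟩ := hF
  refine ⟨P, fun _ => l + m, fun j => ?_, fun x => ?_⟩
  · show P.degreeOf j < 2 * (l + m)
    have := hd j; omega
  · rw [eq_div_iff (prod_wC_ne_zero x (l+m)), prod_pow_add]
    have h2 : F x / (∏ j, (1 + ((x j):ℂ)^2)^m) *
        ((∏ j, (1 + ((x j):ℂ)^2)^l) * (∏ j, (1 + ((x j):ℂ)^2)^m))
        = F x * (∏ j, (1 + ((x j):ℂ)^2)^l) := by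
      field_simp
      rw [mul_right_comm, mul_div_assoc, div_self (prod_wC_ne_zero x m), mul_one]
    rw [h2, hEq x]

lemma exists_radius {n : ℕ} {g : (Fin n → ℝ) → ℂ} (h : HasCompactSupport g) :
    ∃ R : ℝ, 0 ≤ R ∧ ∀ y : Fin n → ℝ, (∃ j, R < |y j|) → g y = 0 := by
  obtain ⟨r, hr⟩ := h.isBounded.subset_closedBall 0
  refine ⟨max r 0, le_max_right _ _, fun y hyj => ?_⟩
  obtain ⟨j, hj⟩ := hyj
  refine image_eq_zero_of_notMem_tsupport fun hy => ?_
  have h1 : ‖y‖ ≤ r := by simpa [dist_zero_right] using hr hy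
  have h2 : |y j| ≤ ‖y‖ := by
    simpa [Real.norm_eq_abs] using norm_le_pi_norm y j
  have := le_max_left r (0:ℝ)
  linarith

lemma exists_ofReal_mul_le {N η : ℝ≥0∞} (hN : N ≠ ∞) (hη : η ≠ 0) :
    ∃ δ : ℝ, 0 < δ ∧ ENNReal.ofReal δ * N ≤ η := by
  rcases eq_or_ne N 0 with rfl | hN0
  · exact ⟨1, one_pos, by simp⟩
  rcases eq_or_ne η ∞ with rfl | hηt
  · exact ⟨1, one_pos, le_top⟩
  have hNr : 0 < N.toReal := ENNReal.toReal_pos hN0 hN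
  have hηr : 0 < η.toReal := ENNReal.toReal_pos hη hηt
  refine ⟨η.toReal / N.toReal, by positivity, ?_⟩
  refine le_of_eq ?_
  calc ENNReal.ofReal (η.toReal/N.toReal) * N
      = ENNReal.ofReal (η.toReal/N.toReal) * ENNReal.ofReal N.toReal := by
        rw [ENNReal.ofReal_toReal hN]
    _ = ENNReal.ofReal (η.toReal/N.toReal * N.toReal) := by
        rw [ENNReal.ofReal_mul (by positivity)]
    _ = ENNReal.ofReal η.toReal := by rw [div_mul_cancel₀ _ hNr.ne']
    _ = η := ENNReal.ofReal_toReal hηt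

lemma Wfun_eLpNorm_lt_top {n : ℕ} {p : ℝ} (hp : 0 < p) {m : ℕ} (hmp : 1 ≤ (m:ℝ) * p) :
    eLpNorm (fun x : Fin n → ℝ => (∏ j, ((1 + (x j)^2)^m)⁻¹ : ℝ))
      (ENNReal.ofReal p) volume < ⊤ := by
  have hP0 : (ENNReal.ofReal p) ≠ 0 := (ENNReal.ofReal_pos.mpr hp).ne'
  rw [eLpNorm_eq_lintegral_rpow_enorm_toReal hP0 ENNReal.ofReal_ne_top,
    ENNReal.toReal_ofReal hp.le]
  have key : ∫⁻ x : Fin n → ℝ,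
      (‖(∏ j, ((1 + (x j)^2)^m)⁻¹ : ℝ)‖₊ : ℝ≥0∞) ^ p
      ≤ ∫⁻ x : Fin n → ℝ, (‖(∏ j, ((1 + (x j)^2))⁻¹ : ℝ)‖₊ : ℝ≥0∞) := by
    refine lintegral_mono fun x => ?_
    have h0 : (0:ℝ) ≤ (∏ j, ((1 + (x j)^2)^m)⁻¹ : ℝ) :=
      Finset.prod_nonneg fun j _ => by positivity
    have h1 : (0:ℝ) ≤ (∏ j, ((1 + (x j)^2))⁻¹ : ℝ) :=
      Finset.prod_nonneg fun j _ => by positivity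
    rw [← enorm_eq_nnnorm, ← enorm_eq_nnnorm, Real.enorm_eq_ofReal h0, Real.enorm_eq_ofReal h1,
      ENNReal.ofReal_rpow_of_nonneg h0 hp.le]
    refine ENNReal.ofReal_le_ofReal ?_
    have hprw : ((∏ j, ((1 + (x j)^2)^m)⁻¹ : ℝ)) ^ p = ∏ j, (((1 + (x j)^2)^m)⁻¹) ^ p := by
      rw [← Real.finset_prod_rpow _ _ (fun j _ => by positivity) p]
    rw [hprw]
    refine Finset.prod_le_prod (fun j _ => by positivity) fun j _ => ?_
    have ha : (1:ℝ) ≤ 1 + (x j)^2 := by nlinarith [sq_nonneg (x j)]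
    have ha0 : (0:ℝ) < 1 + (x j)^2 := by positivity
    have e1 : (((1 + (x j)^2)^m)⁻¹ : ℝ) ^ p = (1 + (x j)^2) ^ (-((m:ℝ)*p)) := by
      rw [← Real.rpow_natCast (1 + (x j)^2) m, ← Real.rpow_neg ha0.le,
        ← Real.rpow_mul ha0.le]
      ring_nf
    have e2 : ((1 + (x j)^2)⁻¹ : ℝ) = (1 + (x j)^2) ^ (-(1:ℝ)) := by
      rw [Real.rpow_neg_one]
    rw [e1, e2]
    exact Real.rpow_le_rpow_of_exponent_le ha (by linarith)
  have hint : Integrable (fun x : Fin n → ℝ => (∏ j, ((1 + (x j)^2))⁻¹ : ℝ)) := by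
    have := MeasureTheory.Integrable.fintype_prod (𝕜 := ℝ) (ι := Fin n) (E := ℝ)
      (f := fun _ t => (1 + t^2)⁻¹) (fun _ => integrable_inv_one_add_sq)
    exact this
  have hfin : (∫⁻ x : Fin n → ℝ, (‖(∏ j, ((1 + (x j)^2))⁻¹ : ℝ)‖₊ : ℝ≥0∞)) < ⊤ :=
    hint.2
  exact ENNReal.rpow_lt_top_of_nonneg (by positivity) (lt_of_le_of_lt key hfin).ne


lemma approx_cont {n : ℕ} {p : ℝ} (hp : 0 < p) {g : (Fin n → ℝ) → ℂ}
    (hgc : Continuous g) (hgs : HasCompactSupport g) {η : ℝ≥0∞} (hη : η ≠ 0) :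
    ∃ Q : (Fin n → ℝ) → ℂ, memA n Q ∧ Continuous Q ∧
      eLpNorm (fun x => Q x - g x) (ENNReal.ofReal p) volume ≤ η := by
  classical
  set m : ℕ := max 1 ⌈p⁻¹⌉₊ with hmdef
  have hm1 : 1 ≤ m := le_max_left _ _
  have hmp : 1 ≤ (m:ℝ) * p := by
    have h1 : p⁻¹ ≤ (⌈p⁻¹⌉₊ : ℝ) := Nat.le_ceil _
    have h2 : ((⌈p⁻¹⌉₊:ℕ):ℝ) ≤ (m:ℝ) := by
      exact_mod_cast le_max_right 1 ⌈p⁻¹⌉₊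
    calc (1:ℝ) = p⁻¹ * p := (inv_mul_cancel₀ hp.ne').symm
      _ ≤ (m:ℝ) * p := mul_le_mul_of_nonneg_right (h1.trans h2) hp.le
  have hWlt := Wfun_eLpNorm_lt_top (n := n) hp hmp
  obtain ⟨δ, hδ, hδle⟩ := exists_ofReal_mul_le hWlt.ne hη
  obtain ⟨R, hR0, hRz⟩ := exists_radius hgs
  set γ : ℝ := (1 + R^2)⁻¹ with hγdef
  have hγ : 0 < γ := by positivity
  have hGc : Continuous (Gfun n m γ g) := continuous_Gfun hγ hgc
  have hGreC : Continuous fun ζ : Kset n => (Gfun n m γ g ζ.val).re :=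
    Complex.continuous_re.comp (hGc.comp continuous_subtype_val)
  have hGimC : Continuous fun ζ : Kset n => (Gfun n m γ g ζ.val).im :=
    Complex.continuous_im.comp (hGc.comp continuous_subtype_val)
  obtain ⟨are, hare⟩ := ContinuousMap.exists_mem_subalgebra_near_continuous_of_separatesPoints
    (Aalg n) (Aalg_separates n) _ hGreC (δ/2) (by positivity)
  obtain ⟨aim, haim⟩ := ContinuousMap.exists_mem_subalgebra_near_continuous_of_separatesPoints
    (Aalg n) (Aalg_separates n) _ hGimC (δ/2) (by positivity)
  set Qnum : (Fin n → ℝ) → ℂ := fun x =>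
    (((are : C(Kset n, ℝ)) ⟨Phi n x, Phi_mem_K n x⟩ : ℝ) : ℂ) +
    (((aim : C(Kset n, ℝ)) ⟨Phi n x, Phi_mem_K n x⟩ : ℝ) : ℂ) * Complex.I with hQnumdef
  have hDD : DD n Qnum :=
    DD_add (DD_of_adjoin (are : C(Kset n, ℝ)) are.2)
      (DD_mul (DD_of_adjoin (aim : C(Kset n, ℝ)) aim.2) (DD_const Complex.I))
  set Q : (Fin n → ℝ) → ℂ := fun x => Qnum x / ∏ j, (1 + ((x j):ℂ)^2)^m with hQdef
  obtain ⟨P, L, hdeg, hform⟩ := DD_div_form hm1 hDD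
  -- continuity
  have hPhiC : Continuous (Phi n) := by
    refine continuous_pi fun j => ?_
    refine Continuous.prodMk ?_ ?_
    · exact (continuous_const.sub ((continuous_apply j).pow 2)).div
        (continuous_const.add ((continuous_apply j).pow 2)) (fun x => (wpos (x j)).ne')
    · exact (continuous_const.mul (continuous_apply j)).div
        (continuous_const.add ((continuous_apply j).pow 2)) (fun x => (wpos (x j)).ne')
  have hptC : Continuous fun x : Fin n → ℝ => (⟨Phi n x, Phi_mem_K n x⟩ : Kset n) :=
    hPhiC.subtype_mk _
  have hQnumC : Continuous Qnum := by
    refine Continuous.add ?_ (Continuous.mul ?_ continuous_const)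
    · exact Complex.continuous_ofReal.comp ((are : C(Kset n, ℝ)).continuous.comp hptC)
    · exact Complex.continuous_ofReal.comp ((aim : C(Kset n, ℝ)).continuous.comp hptC)
  have hprodC : Continuous fun x : Fin n → ℝ => (∏ j, (1 + ((x j):ℂ)^2)^m) := by
    refine continuous_finset_prod _ fun j _ => ?_
    exact (continuous_const.add ((Complex.continuous_ofReal.comp (continuous_apply j)).pow 2)).pow m
  have hQC : Continuous Q := hQnumC.div hprodC (fun x => prod_wC_ne_zero x m)
  -- pointwise bound
  have hWCpos : ∀ x : Fin n → ℝ, (0:ℝ) < ∏ j, (1 + (x j)^2)^m :=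
    fun x => Finset.prod_pos fun j _ => by positivity
  have hkey : ∀ x : Fin n → ℝ, (∏ j, (1 + ((x j):ℂ)^2)^m)
      = (((∏ j, (1 + (x j)^2)^m : ℝ)):ℂ) := by
    intro x
    push_cast
    rfl
  have hA : ∀ x : Fin n → ℝ, ‖Qnum x - Gfun n m γ g (Phi n x)‖ ≤ δ := by
    intro x
    set z := Qnum x - Gfun n m γ g (Phi n x) with hz
    set pt : Kset n := ⟨Phi n x, Phi_mem_K n x⟩ with hpt
    have hre : z.re = (are : C(Kset n, ℝ)) pt - (Gfun n m γ g (Phi n x)).re := by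
      simp [hz, hQnumdef, hpt]
    have him : z.im = (aim : C(Kset n, ℝ)) pt - (Gfun n m γ g (Phi n x)).im := by
      simp [hz, hQnumdef, hpt]
    calc ‖z‖ ≤ |z.re| + |z.im| := Complex.norm_le_abs_re_add_abs_im z
      _ ≤ δ/2 + δ/2 := by
          refine add_le_add ?_ ?_
          · rw [hre]
            exact le_of_lt (by simpa [Real.norm_eq_abs] using hare pt)
          · rw [him]
            exact le_of_lt (by simpa [Real.norm_eq_abs] using haim pt)
      _ = δ := by ring
  have hbound : ∀ x : Fin n → ℝ, ‖Q x - g x‖ ≤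
      ‖δ • (fun y : Fin n → ℝ => (∏ j, ((1 + (y j)^2)^m)⁻¹ : ℝ)) x‖ := by
    intro x
    have hWC := hWCpos x
    have hsub : Q x - g x = (Qnum x - Gfun n m γ g (Phi n x)) /
        (((∏ j, (1 + (x j)^2)^m : ℝ)):ℂ) := by
      rw [hQdef]
      simp only
      rw [hkey x, Gfun_Phi (m := m) hR0 hRz x]
      have hD : (((∏ j, (1 + (x j)^2)^m : ℝ)):ℂ) ≠ 0 :=
        Complex.ofReal_ne_zero.mpr (hWCpos x).ne'
      rw [eq_div_iff hD, sub_mul, div_mul_cancel₀ _ hD]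
    rw [hsub, norm_div]
    have h2 : ‖(((∏ j, (1 + (x j)^2)^m : ℝ)):ℂ)‖ = ∏ j, (1 + (x j)^2)^m := by
      rw [Complex.norm_real, Real.norm_eq_abs, abs_of_pos hWC]
    rw [h2]
    have h3 : ‖δ • (fun y : Fin n → ℝ => (∏ j, ((1 + (y j)^2)^m)⁻¹ : ℝ)) x‖
        = δ * (∏ j, (1 + (x j)^2)^m)⁻¹ := by
      simp only [Pi.smul_apply, smul_eq_mul]
      rw [Real.norm_eq_abs, Finset.prod_inv_distrib, abs_of_pos (by positivity)]
    rw [h3, div_eq_mul_inv]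
    exact mul_le_mul_of_nonneg_right (hA x) (by positivity)
  refine ⟨Q, ⟨P, L, hdeg, fun x => hform x⟩, hQC, ?_⟩
  calc eLpNorm (fun x => Q x - g x) (ENNReal.ofReal p) volume
      ≤ eLpNorm (δ • (fun y : Fin n → ℝ => (∏ j, ((1 + (y j)^2)^m)⁻¹ : ℝ)))
        (ENNReal.ofReal p) volume := eLpNorm_mono hbound
    _ = (‖δ‖₊ : ℝ≥0∞) * eLpNorm (fun y : Fin n → ℝ => (∏ j, ((1 + (y j)^2)^m)⁻¹ : ℝ))
        (ENNReal.ofReal p) volume := eLpNorm_const_smul _ _ _ _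
    _ = ENNReal.ofReal δ * eLpNorm (fun y : Fin n → ℝ => (∏ j, ((1 + (y j)^2)^m)⁻¹ : ℝ))
        (ENNReal.ofReal p) volume := by rw [← enorm_eq_nnnorm, Real.enorm_eq_ofReal hδ.le]
    _ ≤ η := hδle


lemma lpNorm_eq {n : ℕ} {p : ℝ} (hp : 0 < p) (F : (Fin n → ℝ) → ℂ) :
    lpNorm n p F = eLpNorm F (ENNReal.ofReal p) volume ^ p := by
  have hP0 : (ENNReal.ofReal p) ≠ 0 := (ENNReal.ofReal_pos.mpr hp).ne'
  rw [eLpNorm_eq_lintegral_rpow_enorm_toReal hP0 ENNReal.ofReal_ne_top,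
    ENNReal.toReal_ofReal hp.le, ← ENNReal.rpow_mul, one_div,
    inv_mul_cancel₀ hp.ne', ENNReal.rpow_one]
  rfl

end St7

open St7

/-- For `0<p<∞`, the class `𝒜` is dense in `L^p(ℝ^n)`: for every
`f ∈ L^p(ℝ^n)` and `ε > 0` there is `Q ∈ 𝒜` with `∫_{ℝ^n}|Q-f|^p dx < ε`. -/
theorem statement7 (n : ℕ) (p : ℝ) (hp : 0 < p)
    (f : (Fin n → ℝ) → ℂ) (hf : MemLp' n p f) (ε : ℝ) (hε : 0 < ε) :
    ∃ Q : (Fin n → ℝ) → ℂ, memA n Q ∧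
      lpNorm n p (fun x => Q x - f x) < ENNReal.ofReal ε := by
  classical
  set P : ℝ≥0∞ := ENNReal.ofReal p with hPdef
  have hP0 : P ≠ 0 := (ENNReal.ofReal_pos.mpr hp).ne'
  have hPt : P ≠ ⊤ := ENNReal.ofReal_ne_top
  have hfm : MemLp f P volume := by
    refine ⟨(aestronglyMeasurable_iff_aemeasurable).mpr hf.1, ?_⟩
    rcases eq_or_ne (eLpNorm f P volume) ⊤ with htop | hne
    · exfalso
      have h2 := hf.2
      rw [lpNorm_eq hp f, htop, ENNReal.top_rpow_of_pos hp] at h2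
      exact (lt_irrefl _ h2).elim
    · exact hne.lt_top
  set T : ℝ≥0∞ := (ENNReal.ofReal ε) ^ (1/p) with hTdef
  have hε0 : ENNReal.ofReal ε ≠ 0 := (ENNReal.ofReal_pos.mpr hε).ne'
  have hT0 : T ≠ 0 := by
    rw [hTdef]
    simp [ENNReal.rpow_eq_zero_iff, hε0, ENNReal.ofReal_ne_top]
  have hTt : T ≠ ⊤ := by
    rw [hTdef]
    simp [ENNReal.rpow_eq_top_iff, hε0, ENNReal.ofReal_ne_top]
  set C : ℝ≥0∞ := ENNReal.LpAddConst P with hCdef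
  have hCt : C ≠ ⊤ := (ENNReal.LpAddConst_lt_top P).ne
  set D : ℝ≥0∞ := 2*C + 2 with hDdef
  have hD0 : D ≠ 0 := by
    rw [hDdef]
    intro h
    rw [add_eq_zero] at h
    exact (by norm_num : (2:ℝ≥0∞) ≠ 0) h.2
  have hDt : D ≠ ⊤ := by
    rw [hDdef]
    exact ENNReal.add_ne_top.mpr ⟨ENNReal.mul_ne_top (by norm_num) hCt, by norm_num⟩
  set η : ℝ≥0∞ := T / D with hηdef
  have hη0 : η ≠ 0 := by
    rw [hηdef]
    exact (ENNReal.div_pos hT0 hDt).ne'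
  have hηt : η ≠ ⊤ := by
    rw [hηdef]
    exact (ENNReal.div_lt_top hTt hD0).ne
  obtain ⟨g, hgs, hfg, hgc, hgm⟩ := hfm.exists_hasCompactSupport_eLpNorm_sub_le hPt hη0
  obtain ⟨Q, hQA, hQC, hQg⟩ := approx_cont (η := η) hp hgc hgs hη0
  refine ⟨Q, hQA, ?_⟩
  rw [lpNorm_eq hp]
  have hsum : (fun x => Q x - f x) = (fun x => Q x - g x) + (g - f) := by
    funext x
    simp only [Pi.add_apply, Pi.sub_apply]
    ring
  have h1 : eLpNorm (fun x => Q x - f x) P volume ≤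
      C * (eLpNorm (fun x => Q x - g x) P volume + eLpNorm (g - f) P volume) := by
    rw [hsum]
    exact eLpNorm_add_le' (hQC.sub hgc).aestronglyMeasurable
      (hgm.aestronglyMeasurable.sub hfm.aestronglyMeasurable) P
  have h2 : eLpNorm (g - f) P volume ≤ η := by
    rw [eLpNorm_sub_comm]
    exact hfg
  have hlt : eLpNorm (fun x => Q x - f x) P volume < T := by
    calc eLpNorm (fun x => Q x - f x) P volume
        ≤ C * (eLpNorm (fun x => Q x - g x) P volume + eLpNorm (g - f) P volume) := h1
      _ ≤ C * (η + η) := by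
          refine mul_le_mul_right (add_le_add hQg h2) C
      _ = (2*C) * η := by ring
      _ < D * η := by
          refine (ENNReal.mul_lt_mul_iff_left hη0 hηt).mpr ?_
          rw [hDdef]
          exact ENNReal.lt_add_right (ENNReal.mul_ne_top (by norm_num) hCt) (by norm_num)
      _ = T := by
          rw [hηdef]
          exact ENNReal.mul_div_cancel hD0 hDt
  have hfinal := ENNReal.rpow_lt_rpow hlt hp
  rw [hTdef, ← ENNReal.rpow_mul, one_div, inv_mul_cancel₀ hp.ne', ENNReal.rpow_one] at hfinal
  exact hfinal

end
end

section
/- The class 𝒜 is dense in C₀(ℝ^n) with respect to the supremum norm: for every continuous function g : ℝ^n → ℂ vanishing at infinity and every ε > 0 there exists R ∈ 𝒜 with sup_{x∈ℝ^n} |R(x) − g(x)| < ε. -/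
open MeasureTheory Complex Filter
open scoped ENNReal NNReal Topology

noncomputable section

namespace Statement8Aux

open MvPolynomial

variable {n : ℕ}

lemma one_add_sq_ne (t : ℝ) : (1 : ℂ) + (t : ℂ) ^ 2 ≠ 0 := by
  have h : ((1 + t ^ 2 : ℝ) : ℂ) = 1 + (t : ℂ) ^ 2 := by push_cast; ring
  rw [← h]
  exact Complex.ofReal_ne_zero.mpr (by positivity)

lemma Dc_ne (x : Fin n → ℝ) (m : Fin n → ℕ) :
    (∏ k, (1 + (x k : ℂ) ^ 2) ^ (m k)) ≠ 0 :=
  Finset.prod_ne_zero_iff.mpr fun k _ => pow_ne_zero _ (one_add_sq_ne _)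

lemma Dc_mul (x : Fin n → ℝ) (a b : Fin n → ℕ) :
    (∏ k, (1 + (x k : ℂ) ^ 2) ^ (a k)) * (∏ k, (1 + (x k : ℂ) ^ 2) ^ (b k)) =
      ∏ k, (1 + (x k : ℂ) ^ 2) ^ (a k + b k) := by
  rw [← Finset.prod_mul_distrib]
  exact Finset.prod_congr rfl fun k _ => (pow_add _ _ _).symm

lemma degreeOf_Dp_le (j : Fin n) (m : Fin n → ℕ) :
    degreeOf j (∏ k, (1 + X k ^ 2 : MvPolynomial (Fin n) ℂ) ^ (m k)) ≤ 2 * m j := by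
  refine (degreeOf_prod_le j _ _).trans ?_
  have h : ∀ k : Fin n,
      degreeOf j ((1 + X k ^ 2 : MvPolynomial (Fin n) ℂ) ^ (m k)) ≤
        if j = k then 2 * m j else 0 := by
    intro k
    refine (degreeOf_pow_le j _ (m k)).trans ?_
    have h2 : degreeOf j (1 + X k ^ 2 : MvPolynomial (Fin n) ℂ) ≤ if j = k then 2 else 0 := by
      refine (degreeOf_add_le j _ _).trans ?_
      have e1 : degreeOf j (1 : MvPolynomial (Fin n) ℂ) = 0 := by
        simpa using degreeOf_C (1 : ℂ) j
      have e2 : degreeOf j (X k ^ 2 : MvPolynomial (Fin n) ℂ) ≤ 2 * degreeOf j (X k) :=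
        degreeOf_pow_le j _ 2
      rw [degreeOf_X] at e2
      rcases eq_or_ne j k with h | h <;> simp_all
    rcases eq_or_ne j k with h | h
    · subst h; simp only [if_pos rfl] at h2 ⊢
      calc m j * degreeOf j (1 + X j ^ 2 : MvPolynomial (Fin n) ℂ) ≤ m j * 2 :=
        Nat.mul_le_mul_left _ h2
      _ = 2 * m j := Nat.mul_comm _ _
    · simp only [if_neg h] at h2 ⊢
      have := Nat.mul_le_mul_left (m k) h2
      simpa using this
  refine (Finset.sum_le_sum fun k _ => h k).trans ?_
  simp [Finset.sum_ite_eq]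

lemma eval_Dp (x : Fin n → ℝ) (m : Fin n → ℕ) :
    eval (fun j => (x j : ℂ)) (∏ k, (1 + X k ^ 2 : MvPolynomial (Fin n) ℂ) ^ (m k)) =
      ∏ k, (1 + (x k : ℂ) ^ 2) ^ (m k) := by
  simp

lemma memA_congr {f g : (Fin n → ℝ) → ℂ} (h : ∀ x, f x = g x) (hf : memA n f) : memA n g := by
  obtain ⟨P, l, hd, he⟩ := hf
  exact ⟨P, l, hd, fun x => by rw [← h x]; exact he x⟩

lemma memA_zero : memA n (fun _ => (0 : ℂ)) :=
  ⟨0, fun _ => 1, fun j => by simp [degreeOf_zero], fun x => by simp⟩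

lemma memA_w : memA n (fun x => (((∏ j, (1 + (x j) ^ 2))⁻¹ : ℝ) : ℂ)) := by
  refine ⟨1, fun _ => 1, fun j => ?_, fun x => ?_⟩
  · have h : degreeOf j (1 : MvPolynomial (Fin n) ℂ) = 0 := by simpa using degreeOf_C (1:ℂ) j
    show degreeOf j (1 : MvPolynomial (Fin n) ℂ) < 2 * 1
    omega
  · rw [map_one]
    push_cast
    simp [one_div, pow_one]

lemma memA_r (i : Fin n) :
    memA n (fun x => ((x i * (∏ j, (1 + (x j) ^ 2))⁻¹ : ℝ) : ℂ)) := by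
  classical
  refine ⟨X i, fun _ => 1, fun j => ?_, fun x => ?_⟩
  · rw [degreeOf_X]
    rcases eq_or_ne j i with h | h <;> simp [h]
  · rw [eval_X]
    push_cast
    simp [div_eq_mul_inv, pow_one]

lemma memA_add {f g : (Fin n → ℝ) → ℂ} (hf : memA n f) (hg : memA n g) :
    memA n (fun x => f x + g x) := by
  obtain ⟨P₁, l₁, hd₁, he₁⟩ := hf
  obtain ⟨P₂, l₂, hd₂, he₂⟩ := hg
  set l : Fin n → ℕ := fun j => l₁ j ⊔ l₂ j with hl
  refine ⟨P₁ * ∏ k, (1 + X k ^ 2) ^ (l k - l₁ k) + P₂ * ∏ k, (1 + X k ^ 2) ^ (l k - l₂ k),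
      l, fun j => ?_, fun x => ?_⟩
  · refine (degreeOf_add_le _ _ _).trans_lt ?_
    have b1 : degreeOf j (P₁ * ∏ k, (1 + X k ^ 2 : MvPolynomial (Fin n) ℂ) ^ (l k - l₁ k)) <
        2 * l j := by
      refine (degreeOf_mul_le _ _ _).trans_lt ?_
      have := degreeOf_Dp_le j (fun k => l k - l₁ k)
      have h1 := hd₁ j
      have : degreeOf j P₁ + degreeOf j (∏ k, (1 + X k ^ 2 : MvPolynomial (Fin n) ℂ) ^ (l k - l₁ k))
          < 2 * l₁ j + 2 * (l j - l₁ j) := by omega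
      refine this.trans_le ?_
      have : l₁ j ≤ l j := le_max_left _ _
      omega
    have b2 : degreeOf j (P₂ * ∏ k, (1 + X k ^ 2 : MvPolynomial (Fin n) ℂ) ^ (l k - l₂ k)) <
        2 * l j := by
      refine (degreeOf_mul_le _ _ _).trans_lt ?_
      have := degreeOf_Dp_le j (fun k => l k - l₂ k)
      have h2 := hd₂ j
      have : degreeOf j P₂ + degreeOf j (∏ k, (1 + X k ^ 2 : MvPolynomial (Fin n) ℂ) ^ (l k - l₂ k))
          < 2 * l₂ j + 2 * (l j - l₂ j) := by omega
      refine this.trans_le ?_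
      have : l₂ j ≤ l j := le_max_right _ _
      omega
    exact max_lt b1 b2
  · show f x + g x = _
    rw [he₁ x, he₂ x, map_add, map_mul, map_mul, eval_Dp, eval_Dp]
    have k1 : (∏ k, (1 + (x k : ℂ) ^ 2) ^ (l k - l₁ k)) * ∏ k, (1 + (x k : ℂ) ^ 2) ^ (l₁ k) =
        ∏ k, (1 + (x k : ℂ) ^ 2) ^ (l k) := by
      rw [Dc_mul]
      exact Finset.prod_congr rfl fun k _ => by
        congr 1
        have : l₁ k ≤ l k := le_max_left _ _
        omega
    have k2 : (∏ k, (1 + (x k : ℂ) ^ 2) ^ (l k - l₂ k)) * ∏ k, (1 + (x k : ℂ) ^ 2) ^ (l₂ k) =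
        ∏ k, (1 + (x k : ℂ) ^ 2) ^ (l k) := by
      rw [Dc_mul]
      exact Finset.prod_congr rfl fun k _ => by
        congr 1
        have : l₂ k ≤ l k := le_max_right _ _
        omega
    have hc1 := Dc_ne x (fun k => l k - l₁ k)
    have hc2 := Dc_ne x (fun k => l k - l₂ k)
    have k1' : (∏ k, (1 + (x k : ℂ) ^ 2) ^ (l₁ k)) * ∏ k, (1 + (x k : ℂ) ^ 2) ^ (l k - l₁ k) =
        ∏ k, (1 + (x k : ℂ) ^ 2) ^ (l k) := by rw [mul_comm]; exact k1
    have k2' : (∏ k, (1 + (x k : ℂ) ^ 2) ^ (l₂ k)) * ∏ k, (1 + (x k : ℂ) ^ 2) ^ (l k - l₂ k) =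
        ∏ k, (1 + (x k : ℂ) ^ 2) ^ (l k) := by rw [mul_comm]; exact k2
    calc MvPolynomial.eval (fun j => (x j : ℂ)) P₁ / (∏ k, (1 + (x k : ℂ) ^ 2) ^ (l₁ k))
          + MvPolynomial.eval (fun j => (x j : ℂ)) P₂ / (∏ k, (1 + (x k : ℂ) ^ 2) ^ (l₂ k))
        = MvPolynomial.eval (fun j => (x j : ℂ)) P₁ * (∏ k, (1 + (x k : ℂ) ^ 2) ^ (l k - l₁ k)) /
            ((∏ k, (1 + (x k : ℂ) ^ 2) ^ (l₁ k)) * (∏ k, (1 + (x k : ℂ) ^ 2) ^ (l k - l₁ k)))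
          + MvPolynomial.eval (fun j => (x j : ℂ)) P₂ * (∏ k, (1 + (x k : ℂ) ^ 2) ^ (l k - l₂ k)) /
            ((∏ k, (1 + (x k : ℂ) ^ 2) ^ (l₂ k)) * (∏ k, (1 + (x k : ℂ) ^ 2) ^ (l k - l₂ k))) := by
          rw [mul_div_mul_right _ _ hc1, mul_div_mul_right _ _ hc2]
      _ = (MvPolynomial.eval (fun j => (x j : ℂ)) P₁ * (∏ k, (1 + (x k : ℂ) ^ 2) ^ (l k - l₁ k))
          + MvPolynomial.eval (fun j => (x j : ℂ)) P₂ * (∏ k, (1 + (x k : ℂ) ^ 2) ^ (l k - l₂ k))) /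
            (∏ k, (1 + (x k : ℂ) ^ 2) ^ (l k)) := by rw [k1', k2', ← add_div]

lemma memA_mul {f g : (Fin n → ℝ) → ℂ} (hf : memA n f) (hg : memA n g) :
    memA n (fun x => f x * g x) := by
  obtain ⟨P₁, l₁, hd₁, he₁⟩ := hf
  obtain ⟨P₂, l₂, hd₂, he₂⟩ := hg
  refine ⟨P₁ * P₂, fun j => l₁ j + l₂ j, fun j => ?_, fun x => ?_⟩
  · show degreeOf j (P₁ * P₂) < 2 * (l₁ j + l₂ j)
    refine (degreeOf_mul_le _ _ _).trans_lt ?_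
    have h1 := hd₁ j; have h2 := hd₂ j; omega
  · show f x * g x = _
    rw [he₁ x, he₂ x, map_mul, div_mul_div_comm, Dc_mul]

lemma memA_cmul (c : ℂ) {f : (Fin n → ℝ) → ℂ} (hf : memA n f) :
    memA n (fun x => c * f x) := by
  obtain ⟨P, l, hd, he⟩ := hf
  refine ⟨MvPolynomial.C c * P, l, fun j => ?_, fun x => ?_⟩
  · exact (degreeOf_C_mul_le _ _ _).trans_lt (hd j)
  · show c * f x = _
    rw [he x, map_mul, eval_C, mul_div_assoc]


def wfun (n : ℕ) (x : Fin n → ℝ) : ℝ := (∏ j, (1 + (x j) ^ 2))⁻¹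

lemma prod_pos' (x : Fin n → ℝ) : 0 < ∏ j, (1 + (x j) ^ 2) :=
  Finset.prod_pos fun j _ => by positivity

lemma wfun_pos (x : Fin n → ℝ) : 0 < wfun n x := inv_pos.mpr (prod_pos' x)

lemma wfun_cont : Continuous (wfun n) := by
  apply Continuous.inv₀
  · exact continuous_finset_prod _ fun j _ => by continuity
  · exact fun x => (prod_pos' x).ne'

lemma memA_wfun : memA n (fun x => ((wfun n x : ℝ) : ℂ)) := memA_w

lemma memA_rfun (i : Fin n) : memA n (fun x => ((x i * wfun n x : ℝ) : ℂ)) := memA_r i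

lemma key_ineq (hn : 0 < n) (x : Fin n → ℝ) : 1 + ‖x‖ ^ 2 ≤ ∏ j, (1 + (x j) ^ 2) := by
  haveI : Nonempty (Fin n) := ⟨⟨0, hn⟩⟩
  obtain ⟨j, -, hj⟩ := Finset.exists_mem_eq_sup (Finset.univ : Finset (Fin n))
    Finset.univ_nonempty (fun b => (‖x b‖₊ : ℝ≥0))
  have hxj : ‖x‖ = |x j| := by
    rw [Pi.norm_def, hj, coe_nnnorm, Real.norm_eq_abs]
  calc 1 + ‖x‖ ^ 2 = 1 + (x j) ^ 2 := by rw [hxj, _root_.sq_abs]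
    _ = ∏ i, (if i = j then 1 + (x i) ^ 2 else 1) := by simp
    _ ≤ ∏ i, (1 + (x i) ^ 2) := Finset.prod_le_prod
        (fun i _ => by split <;> positivity)
        (fun i _ => by split <;> nlinarith [sq_nonneg (x i)])

lemma wfun_le (hn : 0 < n) (x : Fin n → ℝ) : wfun n x ≤ (1 + ‖x‖ ^ 2)⁻¹ :=
  inv_anti₀ (by positivity) (key_ineq hn x)

lemma aux_t1 : Tendsto (fun t : ℝ => (1 + t ^ 2)⁻¹) atTop (𝓝 0) :=
  Tendsto.inv_tendsto_atTop (tendsto_atTop_add_const_left _ 1 (tendsto_pow_atTop two_ne_zero))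

lemma aux_t2 : Tendsto (fun t : ℝ => t * (1 + t ^ 2)⁻¹) atTop (𝓝 0) := by
  have h : Tendsto (fun t : ℝ => (t⁻¹ + t)⁻¹) atTop (𝓝 0) :=
    Tendsto.inv_tendsto_atTop (tendsto_inv_atTop_zero.add_atTop tendsto_id)
  refine h.congr' ?_
  filter_upwards [eventually_gt_atTop 0] with t ht
  have h1 : t⁻¹ + t = (1 + t ^ 2) / t := by field_simp
  rw [h1, inv_div, div_eq_mul_inv]

lemma wfun_tendsto (hn : 0 < n) :
    Tendsto (wfun n) (cocompact (Fin n → ℝ)) (𝓝 0) := by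
  apply squeeze_zero_norm (fun x => ?_) (aux_t1.comp tendsto_norm_cocompact_atTop)
  rw [Real.norm_eq_abs, abs_of_pos (wfun_pos x)]
  exact wfun_le hn x

lemma rfun_tendsto (hn : 0 < n) (j : Fin n) :
    Tendsto (fun x : Fin n → ℝ => x j * wfun n x) (cocompact (Fin n → ℝ)) (𝓝 0) := by
  apply squeeze_zero_norm (fun x => ?_) (aux_t2.comp tendsto_norm_cocompact_atTop)
  rw [Real.norm_eq_abs, abs_mul, abs_of_pos (wfun_pos x)]
  have h1 : |x j| ≤ ‖x‖ := by simpa [Real.norm_eq_abs] using norm_le_pi_norm x j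
  exact mul_le_mul h1 (wfun_le hn x) (le_of_lt (wfun_pos x)) (norm_nonneg x)

lemma memA_of_mem_adjoin {S : Set C(OnePoint (Fin n → ℝ), ℝ)}
    (hS : ∀ f ∈ S, memA n (fun x => ((f (x : OnePoint (Fin n → ℝ)) : ℝ) : ℂ)) ∧
      f (OnePoint.infty) = 0)
    {a : C(OnePoint (Fin n → ℝ), ℝ)} (ha : a ∈ Algebra.adjoin ℝ S) :
    memA n (fun x => ((a (x : OnePoint (Fin n → ℝ)) : ℝ) : ℂ) -
      ((a (OnePoint.infty) : ℝ) : ℂ)) := by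
  induction ha using Algebra.adjoin_induction with
  | mem f hf =>
      refine memA_congr (fun x => ?_) (hS f hf).1
      rw [(hS f hf).2]
      simp
  | algebraMap r =>
      refine memA_congr (fun x => ?_) memA_zero
      simp
  | add p q hp hq hp' hq' =>
      refine memA_congr (fun x => ?_) (memA_add hp' hq')
      simp only [ContinuousMap.add_apply]
      push_cast
      ring
  | mul p q hp hq hp' hq' =>
      refine memA_congr (fun x => ?_)
        (memA_add (memA_add (memA_mul hp' hq')
          (memA_cmul ((p (OnePoint.infty) : ℝ) : ℂ) hq'))
          (memA_cmul ((q (OnePoint.infty) : ℝ) : ℂ) hp'))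
      simp only [ContinuousMap.mul_apply]
      push_cast
      ring

end Statement8Aux

open Statement8Aux in
/-- The class `𝒜` is dense in `C₀(ℝ^n)` for the supremum norm. -/
theorem statement8 (n : ℕ) (g : (Fin n → ℝ) → ℂ) (hgc : Continuous g)
    (hg0 : Tendsto g (cocompact (Fin n → ℝ)) (nhds 0)) (ε : ℝ) (hε : 0 < ε) :
    ∃ R : (Fin n → ℝ) → ℂ, memA n R ∧ ∀ x, ‖R x - g x‖ < ε := by
  classical
  rcases Nat.eq_zero_or_pos n with hn | hn
  · subst hn
    refine ⟨fun _ => g default, ⟨MvPolynomial.C (g default), fun j => j.elim0,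
      fun j => j.elim0, fun x => by simp⟩, fun x => ?_⟩
    have hx : x = default := Subsingleton.elim _ _
    rw [hx]
    simpa using hε
  · haveI : Nonempty (Fin n) := ⟨⟨0, hn⟩⟩
    set Y := OnePoint (Fin n → ℝ) with hY
    have hcc : coclosedCompact (Fin n → ℝ) = cocompact (Fin n → ℝ) :=
      Filter.coclosedCompact_eq_cocompact
    let W : C(Y, ℝ) := OnePoint.continuousMapMk ⟨wfun n, wfun_cont⟩ 0
      (by rw [hcc]; exact wfun_tendsto hn)
    let Rj : Fin n → C(Y, ℝ) := fun j => OnePoint.continuousMapMk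
      ⟨fun x => x j * wfun n x, (continuous_apply j).mul wfun_cont⟩ 0
      (by rw [hcc]; exact rfun_tendsto hn j)
    let G : C(Y, ℂ) := OnePoint.continuousMapMk ⟨g, hgc⟩ 0 (by rw [hcc]; exact hg0)
    set S : Set C(Y, ℝ) := insert W (Set.range Rj) with hSdef
    have hsep : (Algebra.adjoin ℝ S).SeparatesPoints := by
      intro p q hpq
      induction p using OnePoint.rec with
      | infty =>
          induction q using OnePoint.rec with
          | infty => exact absurd rfl hpq
          | coe y =>
              refine ⟨W, ⟨W, Algebra.subset_adjoin (Set.mem_insert _ _), rfl⟩, ?_⟩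
              show (0 : ℝ) ≠ wfun n y
              exact (wfun_pos y).ne
      | coe x =>
          induction q using OnePoint.rec with
          | infty =>
              refine ⟨W, ⟨W, Algebra.subset_adjoin (Set.mem_insert _ _), rfl⟩, ?_⟩
              show wfun n x ≠ (0 : ℝ)
              exact (wfun_pos x).ne'
          | coe y =>
              have hxy : x ≠ y := fun h => hpq (by rw [h])
              by_cases hww : wfun n x = wfun n y
              · obtain ⟨j, hj⟩ := Function.ne_iff.mp hxy
                refine ⟨Rj j, ⟨Rj j, Algebra.subset_adjoin
                  (Set.mem_insert_iff.mpr (Or.inr ⟨j, rfl⟩)), rfl⟩, ?_⟩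
                show x j * wfun n x ≠ y j * wfun n y
                rw [← hww]
                exact fun h => hj (mul_right_cancel₀ (wfun_pos x).ne' h)
              · refine ⟨W, ⟨W, Algebra.subset_adjoin (Set.mem_insert _ _), rfl⟩, ?_⟩
                show wfun n x ≠ wfun n y
                exact hww
    obtain ⟨a, ha⟩ := ContinuousMap.exists_mem_subalgebra_near_continuous_of_separatesPoints
      (Algebra.adjoin ℝ S) hsep (fun p => (G p).re)
      (Complex.continuous_re.comp G.continuous) (ε/5) (by positivity)
    obtain ⟨b, hb⟩ := ContinuousMap.exists_mem_subalgebra_near_continuous_of_separatesPoints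
      (Algebra.adjoin ℝ S) hsep (fun p => (G p).im)
      (Complex.continuous_im.comp G.continuous) (ε/5) (by positivity)
    have hgen : ∀ f ∈ S, memA n (fun x => ((f (x : Y) : ℝ) : ℂ)) ∧
        f (OnePoint.infty) = 0 := by
      rintro f (rfl | ⟨j, rfl⟩)
      · exact ⟨memA_wfun, rfl⟩
      · exact ⟨memA_rfun j, rfl⟩
    have hA := memA_of_mem_adjoin hgen a.2
    have hB := memA_of_mem_adjoin hgen b.2
    set a₀ : C(Y, ℝ) := (a : C(Y, ℝ)) with ha₀
    set b₀ : C(Y, ℝ) := (b : C(Y, ℝ)) with hb₀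
    refine ⟨fun x => ((a₀ (x : Y) - a₀ (OnePoint.infty) : ℝ) : ℂ) +
        ((b₀ (x : Y) - b₀ (OnePoint.infty) : ℝ) : ℂ) * Complex.I, ?_, ?_⟩
    · refine memA_congr (fun x => ?_) (memA_add hA (memA_cmul Complex.I hB))
      push_cast
      ring
    · intro x
      have hG1 : (G (x : Y)).re = (g x).re := rfl
      have hG2 : (G (x : Y)).im = (g x).im := rfl
      have hG3 : (G (OnePoint.infty : Y)) = 0 := rfl
      have e1 : |a₀ (x : Y) - (g x).re| < ε/5 := by
        simpa [Real.norm_eq_abs, hG1] using ha (x : Y)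
      have e2 : |a₀ (OnePoint.infty : Y)| < ε/5 := by
        simpa [Real.norm_eq_abs, hG3] using ha (OnePoint.infty)
      have f1 : |b₀ (x : Y) - (g x).im| < ε/5 := by
        simpa [Real.norm_eq_abs, hG2] using hb (x : Y)
      have f2 : |b₀ (OnePoint.infty : Y)| < ε/5 := by
        simpa [Real.norm_eq_abs, hG3] using hb (OnePoint.infty)
      have hre : (((a₀ (x : Y) - a₀ (OnePoint.infty) : ℝ) : ℂ) +
          ((b₀ (x : Y) - b₀ (OnePoint.infty) : ℝ) : ℂ) * Complex.I) - g x =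
          ((a₀ (x : Y) - a₀ (OnePoint.infty) - (g x).re : ℝ) : ℂ) +
          ((b₀ (x : Y) - b₀ (OnePoint.infty) - (g x).im : ℝ) : ℂ) * Complex.I := by
        conv_lhs => rw [show g x = ((g x).re : ℂ) + ((g x).im : ℂ) * Complex.I from
          (Complex.re_add_im (g x)).symm]
        push_cast
        ring
      rw [hre]
      have hb1 : ‖((a₀ (x : Y) - a₀ (OnePoint.infty) - (g x).re : ℝ) : ℂ)‖ =
          |a₀ (x : Y) - a₀ (OnePoint.infty) - (g x).re| := by
        rw [Complex.norm_real, Real.norm_eq_abs]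
      have hb2 : ‖((b₀ (x : Y) - b₀ (OnePoint.infty) - (g x).im : ℝ) : ℂ) * Complex.I‖ =
          |b₀ (x : Y) - b₀ (OnePoint.infty) - (g x).im| := by
        rw [norm_mul, Complex.norm_real, Complex.norm_I, Real.norm_eq_abs, mul_one]
      have t1 : |a₀ (x : Y) - a₀ (OnePoint.infty) - (g x).re| < 2 * (ε/5) := by
        have h1 := abs_lt.mp e1
        have h2 := abs_lt.mp e2
        exact abs_lt.mpr ⟨by linarith [h1.1, h2.1, h2.2], by linarith [h1.2, h2.1, h2.2]⟩
      have t2 : |b₀ (x : Y) - b₀ (OnePoint.infty) - (g x).im| < 2 * (ε/5) := by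
        have h1 := abs_lt.mp f1
        have h2 := abs_lt.mp f2
        exact abs_lt.mpr ⟨by linarith [h1.1, h2.1, h2.2], by linarith [h1.2, h2.1, h2.2]⟩
      refine lt_of_le_of_lt (norm_add_le _ _) ?_
      rw [hb1, hb2]
      linarith

end
end

section
/- Let 0 < p < 1. Let m and l_1,…,l_n be nonnegative integers with l = max{l_1,…,l_n} and (m−l)p > 1; for each k = 1,…,n let a_{k1},…,a_{km} be pairwise distinct real numbers; let P(x_1,…,x_n) = ∑_{s_1=0}^{l_1}⋯∑_{s_n=0}^{l_n} a_{s_1⋯s_n} x_1^{s_1}⋯x_n^{s_n} be a polynomial with complex coefficients; and define f(x) = P(x)/∏_{k=1}^n ∏_{j=1}^m (x_k − a_{kj}) for x ∈ ℝ^n off the poles. Then f ∈ L^p(ℝ^n), and for every sign vector σ ∈ {+1,−1}^n the rational function R(z) = P(z)/∏_{k=1}^n ∏_{j=1}^m (z_k − a_{kj}) is holomorphic on T_{Γ_σ}, belongs to H^p(T_{Γ_σ}), and has non-tangential boundary limit f(x) at almost every x ∈ ℝ^n; hence f ∈ ⋂_{σ∈{±1}^n} H^p_σ(ℝ^n), and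 in particular ⋂_{σ} H^p_σ(ℝ^n) contains nonzero functions. -/
open MeasureTheory Complex Filter
open scoped ENNReal NNReal Topology

noncomputable section

private lemma rpow_neg_le_rpow_neg {a b : ℝ≥0∞} {p : ℝ} (hp : 0 ≤ p) (h : a ≤ b) :
    b ^ (-p) ≤ a ^ (-p) := by
  rw [ENNReal.rpow_neg, ENNReal.rpow_neg]
  exact ENNReal.inv_le_inv.2 (ENNReal.rpow_le_rpow h hp)

private lemma lint_neg_eq (f : ℝ → ℝ≥0∞) : ∫⁻ x : ℝ, f (-x) = ∫⁻ x : ℝ, f x := by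
  conv_rhs => rw [← Measure.map_neg_eq_self (volume : Measure ℝ)]
  have := lintegral_map_equiv (μ := (volume : Measure ℝ)) f (Homeomorph.neg ℝ).toMeasurableEquiv
  simpa using this.symm

private lemma ennnorm_eq_ofReal_abs' (r : ℝ) : (‖r‖₊ : ℝ≥0∞) = ENNReal.ofReal |r| :=
  Real.enorm_eq_ofReal_abs r

private lemma coe_nnnorm_abs_rpow {r : ℝ} (hr : r ≠ 0) (q : ℝ) :
    (‖|r| ^ q‖₊ : ℝ≥0∞) = (‖r‖₊ : ℝ≥0∞) ^ q := by
  rw [ennnorm_eq_ofReal_abs', ennnorm_eq_ofReal_abs',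
    _root_.abs_of_nonneg (Real.rpow_nonneg (abs_nonneg r) q),
    ENNReal.ofReal_rpow_of_pos (abs_pos.2 hr)]

private lemma lint_near {p : ℝ} (hp0 : 0 < p) (hp1 : p < 1) (c M : ℝ) (hM : 0 < M) :
    ∫⁻ x in Set.Ioc (-M) M, ((‖x - c‖₊ : ℝ≥0∞)) ^ (-p) < ⊤ := by
  have h1 : (-1 : ℝ) < -p := by linarith
  have habs : ∀ b : ℝ, 0 ≤ b → IntervalIntegrable (fun u : ℝ => |u| ^ (-p)) volume 0 b := by
    intro b hb
    have h := intervalIntegral.intervalIntegrable_rpow' (a := 0) (b := b) h1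
    rw [intervalIntegrable_iff, Set.uIoc_of_le hb] at h ⊢
    exact h.congr_fun (fun x hx => by rw [abs_of_pos hx.1]) measurableSet_Ioc
  have habs' : ∀ a b : ℝ, IntervalIntegrable (fun u : ℝ => |u| ^ (-p)) volume a b := by
    have h1side : ∀ b : ℝ, IntervalIntegrable (fun u : ℝ => |u| ^ (-p)) volume 0 b := by
      intro b
      rcases le_total 0 b with hb | hb
      · exact habs b hb
      · rw [IntervalIntegrable.iff_comp_neg]
        simpa using habs (-b) (by linarith)
    exact fun a b => (h1side a).symm.trans (h1side b)
  have h2 := (habs' (-M - c) (M - c)).comp_sub_right c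
  rw [sub_add_cancel, sub_add_cancel, intervalIntegrable_iff,
    Set.uIoc_of_le (by linarith : (-M : ℝ) ≤ M)] at h2
  have hfin : ∫⁻ x in Set.Ioc (-M) M, (‖|x - c| ^ (-p)‖₊ : ℝ≥0∞) < ⊤ := h2.hasFiniteIntegral
  refine lt_of_eq_of_lt ?_ hfin
  apply lintegral_congr_ae
  have hc : ∀ᵐ x ∂(volume.restrict (Set.Ioc (-M) M)), x ≠ c := by
    refine ae_iff.2 ?_
    have : {x : ℝ | ¬ x ≠ c} = {c} := by ext u; simp
    rw [this]
    exact le_antisymm (le_trans (Measure.restrict_le_self _) (by simp)) zero_le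
  filter_upwards [hc] with x hx
  exact (coe_nnnorm_abs_rpow (sub_ne_zero.2 hx) (-p)).symm

private lemma lint_far {q : ℝ} (hq : 1 < q) {M : ℝ} (hM : 1 ≤ M) :
    ∫⁻ x in (Set.Ioc (-M) M)ᶜ, ((‖x‖₊ : ℝ≥0∞)) ^ (-q) < ⊤ := by
  have hIoi : ∀ N : ℝ, 0 < N → ∫⁻ x in Set.Ioi N, ((‖x‖₊ : ℝ≥0∞)) ^ (-q) < ⊤ := by
    intro N hN
    have hint : IntegrableOn (fun x : ℝ => x ^ (-q)) (Set.Ioi N) :=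
      (integrableOn_Ioi_rpow_iff (by linarith)).2 (by linarith)
    have hfin : ∫⁻ x in Set.Ioi N, (‖x ^ (-q)‖₊ : ℝ≥0∞) < ⊤ := hint.hasFiniteIntegral
    refine lt_of_eq_of_lt ?_ hfin
    apply lintegral_congr_ae
    rw [Filter.EventuallyEq, ae_restrict_iff' measurableSet_Ioi]
    refine ae_of_all _ fun x hx => ?_
    have hx0 : 0 < x := lt_trans hN hx
    rw [← abs_of_pos hx0, coe_nnnorm_abs_rpow (abs_ne_zero.1 (by rw [abs_of_pos hx0]; exact hx0.ne')) (-q)]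
    rw [abs_of_pos hx0]
  have hcompl : (Set.Ioc (-M) M)ᶜ ⊆ Set.Iic (-M) ∪ Set.Ioi M := by
    intro x hx
    simp only [Set.mem_compl_iff, Set.mem_Ioc, not_and, not_le] at hx
    rcases le_or_gt x (-M) with h | h
    · exact Or.inl h
    · exact Or.inr (hx h)
  refine lt_of_le_of_lt (lintegral_mono_set hcompl) ?_
  refine lt_of_le_of_lt (lintegral_union_le _ _ _) (ENNReal.add_lt_top.2 ⟨?_, hIoi M (by linarith)⟩)
  -- left piece: reflect
  have hIic : ∫⁻ x in Set.Iic (-M), ((‖x‖₊ : ℝ≥0∞)) ^ (-q)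
      = ∫⁻ x in Set.Ici M, ((‖x‖₊ : ℝ≥0∞)) ^ (-q) := by
    have h1 : ∫⁻ x in Set.Iic (-M), ((‖x‖₊ : ℝ≥0∞)) ^ (-q)
        = ∫⁻ x : ℝ, (Set.Iic (-M)).indicator (fun u => ((‖u‖₊ : ℝ≥0∞)) ^ (-q)) x := by
      rw [lintegral_indicator measurableSet_Iic]
    have h2 : ∫⁻ x in Set.Ici M, ((‖x‖₊ : ℝ≥0∞)) ^ (-q)
        = ∫⁻ x : ℝ, (Set.Ici M).indicator (fun u => ((‖u‖₊ : ℝ≥0∞)) ^ (-q)) x := by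
      rw [lintegral_indicator measurableSet_Ici]
    rw [h1, h2, ← lint_neg_eq (fun x => (Set.Iic (-M)).indicator (fun u => ((‖u‖₊ : ℝ≥0∞)) ^ (-q)) x)]
    apply lintegral_congr fun x => ?_
    by_cases hx : x ∈ Set.Ici M
    · have : -x ∈ Set.Iic (-M) := by simpa using hx
      rw [Set.indicator_of_mem this, Set.indicator_of_mem hx, nnnorm_neg]
    · have : -x ∉ Set.Iic (-M) := by simpa using hx
      rw [Set.indicator_of_notMem this, Set.indicator_of_notMem hx]
  rw [hIic]
  refine lt_of_le_of_lt (lintegral_mono_set ?_) (hIoi (M / 2) (by linarith))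
  intro x hx
  exact lt_of_lt_of_le (by linarith : M / 2 < M) hx

private lemma lemA {m : ℕ} (b : Fin m → ℝ) (hb : Function.Injective b)
    {p : ℝ} (hp0 : 0 < p) (hp1 : p < 1) (T : Finset (Fin m)) (hT : 1 < (T.card : ℝ) * p) :
    ∫⁻ x : ℝ, ∏ j ∈ T, ((‖x - b j‖₊ : ℝ≥0∞)) ^ (-p) < ⊤ := by
  -- T has at least two elements
  have hr1 : 1 < T.card := by
    by_contra h
    push_neg at h
    have : (T.card : ℝ) * p ≤ 1 * 1 := by
      apply mul_le_mul _ hp1.le hp0.le zero_le_one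
      exact_mod_cast h
    linarith
  have hne : T.Nonempty := Finset.card_pos.1 (by omega)
  -- bounds on the points
  set D : ℝ := 1 + ∑ j ∈ T, |b j| with hD
  have hD1 : 1 ≤ D := by
    have : 0 ≤ ∑ j ∈ T, |b j| := Finset.sum_nonneg fun j _ => abs_nonneg _
    simp [hD]; linarith
  have hDb : ∀ j ∈ T, |b j| ≤ D - 1 := by
    intro j hj
    have := Finset.single_le_sum (f := fun j => |b j|) (fun i _ => abs_nonneg _) hj
    simp [hD]; linarith
  set M : ℝ := 2 * D with hMdef
  -- minimal gap
  have hod : (T.offDiag).Nonempty := by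
    obtain ⟨j1, hj1, j2, hj2, hj12⟩ := Finset.one_lt_card.1 hr1
    exact ⟨(j1, j2), Finset.mem_offDiag.2 ⟨hj1, hj2, hj12⟩⟩
  set e0 : ℝ := (T.offDiag).inf' hod (fun q => |b q.1 - b q.2|) with he0def
  have he0 : 0 < e0 := by
    show 0 < (T.offDiag).inf' hod (fun q => |b q.1 - b q.2|)
    refine (Finset.lt_inf'_iff hod).2 ?_
    rintro ⟨j1, j2⟩ hq
    obtain ⟨h1, h2, h12⟩ := Finset.mem_offDiag.1 hq
    exact abs_pos.2 (sub_ne_zero.2 fun hc => h12 (hb hc))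
  have he0le : ∀ j ∈ T, ∀ j' ∈ T, j ≠ j' → e0 ≤ |b j - b j'| := by
    intro j hj j' hj' hjj'
    have hmem : (j, j') ∈ T.offDiag := Finset.mem_offDiag.2 ⟨hj, hj', hjj'⟩
    exact Finset.inf'_le (fun q => |b q.1 - b q.2|) hmem
  set e : ℝ := min (e0 / 2) 1 with hedef
  have he1 : 0 < e := lt_min (by linarith) one_pos
  have he2 : e ≤ 1 := min_le_right _ _
  set K1 : ℝ≥0∞ := (ENNReal.ofReal e) ^ (-(p * m)) with hK1def
  have hK1top : K1 < ⊤ := by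
    rw [hK1def, ENNReal.rpow_neg, ENNReal.inv_lt_top]
    exact ENNReal.rpow_pos (ENNReal.ofReal_pos.2 he1) ENNReal.ofReal_ne_top
  -- split the integral
  rw [← lintegral_add_compl (A := Set.Ioc (-M) M) _ measurableSet_Ioc]
  refine ENNReal.add_lt_top.2 ⟨?_, ?_⟩
  · -- near region
    have hnear : ∀ x : ℝ, ∏ j ∈ T, ((‖x - b j‖₊ : ℝ≥0∞)) ^ (-p)
        ≤ K1 * ∑ j ∈ T, ((‖x - b j‖₊ : ℝ≥0∞)) ^ (-p) := by
      intro x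
      obtain ⟨j0, hj0T, hj0min⟩ := T.exists_min_image (fun j => |x - b j|) hne
      rw [← Finset.mul_prod_erase T _ hj0T]
      have herase : ∏ j ∈ T.erase j0, ((‖x - b j‖₊ : ℝ≥0∞)) ^ (-p) ≤ K1 := by
        have hfac : ∀ j ∈ T.erase j0, ((‖x - b j‖₊ : ℝ≥0∞)) ^ (-p) ≤ (ENNReal.ofReal e) ^ (-p) := by
          intro j hj
          obtain ⟨hjne, hjT⟩ := Finset.mem_erase.1 hj
          have hgap : e ≤ |x - b j| := by
            have h1 : e0 ≤ |b j - b j0| := he0le j hjT j0 hj0T hjne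
            have h2 : |b j - b j0| ≤ |x - b j| + |x - b j0| := by
              have : b j - b j0 = (x - b j0) - (x - b j) := by ring
              rw [this]
              exact le_trans (abs_sub _ _) (by rw [add_comm])
            have h3 : |x - b j0| ≤ |x - b j| := hj0min j hjT
            have : e0 ≤ 2 * |x - b j| := by linarith
            calc e ≤ e0 / 2 := min_le_left _ _
              _ ≤ |x - b j| := by linarith
          apply rpow_neg_le_rpow_neg hp0.le
          rw [ennnorm_eq_ofReal_abs']
          exact ENNReal.ofReal_le_ofReal hgap
        calc ∏ j ∈ T.erase j0, ((‖x - b j‖₊ : ℝ≥0∞)) ^ (-p)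
            ≤ ∏ _j ∈ T.erase j0, (ENNReal.ofReal e) ^ (-p) := Finset.prod_le_prod' hfac
          _ = ((ENNReal.ofReal e) ^ (-p)) ^ ((T.erase j0).card : ℕ) := by
              rw [Finset.prod_const]
          _ = (ENNReal.ofReal e) ^ (-p * ((T.erase j0).card : ℝ)) := by
              rw [← ENNReal.rpow_natCast ((ENNReal.ofReal e) ^ (-p)), ← ENNReal.rpow_mul]
          _ ≤ K1 := by
              rw [hK1def]
              apply ENNReal.rpow_le_rpow_of_exponent_ge (ENNReal.ofReal_le_one.2 he2)
              have hcard : ((T.erase j0).card : ℝ) ≤ (m : ℝ) := by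
                have h := Finset.card_le_card (Finset.subset_univ (T.erase j0))
                rw [Finset.card_univ, Fintype.card_fin] at h
                exact_mod_cast h
              nlinarith [hp0.le]
      calc ((‖x - b j0‖₊ : ℝ≥0∞)) ^ (-p) * ∏ j ∈ T.erase j0, ((‖x - b j‖₊ : ℝ≥0∞)) ^ (-p)
          ≤ (∑ j ∈ T, ((‖x - b j‖₊ : ℝ≥0∞)) ^ (-p)) * K1 := by
            exact mul_le_mul' (Finset.single_le_sum
              (f := fun j => ((‖x - b j‖₊ : ℝ≥0∞)) ^ (-p)) (fun j _ => zero_le) hj0T) herase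
        _ = K1 * ∑ j ∈ T, ((‖x - b j‖₊ : ℝ≥0∞)) ^ (-p) := mul_comm _ _
    refine lt_of_le_of_lt (lintegral_mono fun x => hnear x) ?_
    rw [lintegral_const_mul' _ _ hK1top.ne]
    refine ENNReal.mul_lt_top hK1top ?_
    have hmeas : ∀ j : Fin m, Measurable fun x : ℝ => ((‖x - b j‖₊ : ℝ≥0∞)) ^ (-p) := by
      intro j
      exact (ENNReal.continuous_rpow_const.comp
        (ENNReal.continuous_coe.comp ((continuous_id.sub continuous_const).nnnorm))).measurable
    rw [lintegral_finset_sum _ fun j _ => hmeas j]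
    exact ENNReal.sum_lt_top.2 fun j _ => lint_near hp0 hp1 (b j) M (by linarith)
  · -- far region
    have hfar : ∀ x ∈ (Set.Ioc (-M) M)ᶜ, ∏ j ∈ T, ((‖x - b j‖₊ : ℝ≥0∞)) ^ (-p)
        ≤ (ENNReal.ofReal (1/2 : ℝ)) ^ (-((T.card : ℝ) * p)) * ((‖x‖₊ : ℝ≥0∞)) ^ (-((T.card : ℝ) * p)) := by
      intro x hx
      have hxM : M ≤ |x| := by
        simp only [Set.mem_compl_iff, Set.mem_Ioc, not_and, not_le] at hx
        rcases le_or_gt x (-M) with h | h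
        · rw [abs_of_nonpos (by linarith)]; linarith
        · have := hx h; rw [abs_of_pos (by linarith)]; linarith
      have hfac : ∀ j ∈ T, ((‖x - b j‖₊ : ℝ≥0∞)) ^ (-p) ≤ (ENNReal.ofReal (|x| / 2)) ^ (-p) := by
        intro j hj
        apply rpow_neg_le_rpow_neg hp0.le
        rw [ennnorm_eq_ofReal_abs']
        apply ENNReal.ofReal_le_ofReal
        have h1 : |b j| ≤ D - 1 := hDb j hj
        have h2 : |x| - |b j| ≤ |x - b j| := by
          have := abs_sub_abs_le_abs_sub x (b j)
          linarith
        have : M ≤ |x| := hxM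
        rw [hMdef] at this
        linarith
      calc ∏ j ∈ T, ((‖x - b j‖₊ : ℝ≥0∞)) ^ (-p)
          ≤ ∏ _j ∈ T, (ENNReal.ofReal (|x| / 2)) ^ (-p) := Finset.prod_le_prod' hfac
        _ = ((ENNReal.ofReal (|x| / 2)) ^ (-p)) ^ (T.card : ℕ) := Finset.prod_const _
        _ = (ENNReal.ofReal (|x| / 2)) ^ (-((T.card : ℝ) * p)) := by
            rw [← ENNReal.rpow_natCast ((ENNReal.ofReal (|x| / 2)) ^ (-p)), ← ENNReal.rpow_mul]
            ring_nf
        _ = (ENNReal.ofReal (1/2 : ℝ)) ^ (-((T.card : ℝ) * p)) * ((‖x‖₊ : ℝ≥0∞)) ^ (-((T.card : ℝ) * p)) := by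
            rw [show |x| / 2 = |x| * (1/2) by ring, ENNReal.ofReal_mul (abs_nonneg x),
              ENNReal.mul_rpow_of_ne_top ENNReal.ofReal_ne_top ENNReal.ofReal_ne_top,
              ennnorm_eq_ofReal_abs', mul_comm]
    calc ∫⁻ x in (Set.Ioc (-M) M)ᶜ, ∏ j ∈ T, ((‖x - b j‖₊ : ℝ≥0∞)) ^ (-p)
        ≤ ∫⁻ x in (Set.Ioc (-M) M)ᶜ,
            (ENNReal.ofReal (1/2 : ℝ)) ^ (-((T.card : ℝ) * p)) * ((‖x‖₊ : ℝ≥0∞)) ^ (-((T.card : ℝ) * p)) := by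
          exact lintegral_mono_ae ((ae_restrict_iff' measurableSet_Ioc.compl).2
            (ae_of_all _ fun x hx => hfar x hx))
      _ = (ENNReal.ofReal (1/2 : ℝ)) ^ (-((T.card : ℝ) * p))
            * ∫⁻ x in (Set.Ioc (-M) M)ᶜ, ((‖x‖₊ : ℝ≥0∞)) ^ (-((T.card : ℝ) * p)) := by
          rw [lintegral_const_mul']
          rw [ENNReal.rpow_neg]
          exact ENNReal.inv_ne_top.2 (ENNReal.rpow_pos (ENNReal.ofReal_pos.2 (by norm_num)) ENNReal.ofReal_ne_top).ne'
      _ < ⊤ := by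
          refine ENNReal.mul_lt_top ?_ (lint_far hT (by linarith : (1:ℝ) ≤ M))
          rw [ENNReal.rpow_neg, ENNReal.inv_lt_top]
          exact ENNReal.rpow_pos (ENNReal.ofReal_pos.2 (by norm_num)) ENNReal.ofReal_ne_top

private lemma enn_sum_rpow_le {ι : Type*} (s : Finset ι) (f : ι → ℝ≥0∞) {p : ℝ}
    (hp0 : 0 < p) (hp1 : p ≤ 1) : (∑ i ∈ s, f i) ^ p ≤ ∑ i ∈ s, f i ^ p := by
  induction s using Finset.cons_induction with
  | empty => simp [ENNReal.zero_rpow_of_pos hp0]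
  | cons a s ha ih =>
    rw [Finset.sum_cons, Finset.sum_cons]
    exact le_trans (ENNReal.rpow_add_le_add_rpow _ _ hp0.le hp1) (by gcongr)

private lemma meas_fac (c p : ℝ) : Measurable fun x : ℝ => ((‖x - c‖₊ : ℝ≥0∞)) ^ (-p) :=
  (ENNReal.continuous_rpow_const.comp
    (ENNReal.continuous_coe.comp ((continuous_id.sub continuous_const).nnnorm))).measurable

private lemma oneVar {m : ℕ} (b : Fin m → ℝ) (hb : Function.Injective b)
    {p : ℝ} (hp0 : 0 < p) (hp1 : p < 1) (L : ℕ) (hml : 1 < ((m : ℝ) - (L : ℝ)) * p)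
    (s : ℕ) (hs : s ≤ L) :
    ∃ C : ℝ≥0∞, C < ⊤ ∧ ∀ t : ℝ, (∫⁻ x : ℝ,
      ((‖(x : ℂ) + (t : ℂ) * Complex.I‖₊ : ℝ≥0∞)) ^ ((s : ℝ) * p)
      * ∏ j : Fin m, ((‖(x : ℂ) + (t : ℂ) * Complex.I - (b j : ℂ)‖₊ : ℝ≥0∞)) ^ (-p)) ≤ C := by
  have hLm : (L : ℝ) < m := by nlinarith
  have hLmn : L < m := by exact_mod_cast hLm
  have hsm : s ≤ Finset.univ.card (α := Fin m) := by
    rw [Finset.card_univ, Fintype.card_fin]; omega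
  obtain ⟨S, -, hScard⟩ := Finset.exists_subset_card_eq hsm
  set K : ℝ≥0∞ := ∏ j ∈ S, (1 + (‖b j‖₊ : ℝ≥0∞)) ^ p with hKdef
  have hKtop : K < ⊤ := ENNReal.prod_lt_top fun j _ => ENNReal.rpow_lt_top_of_nonneg hp0.le
    (by exact (ENNReal.add_lt_top.2 ⟨ENNReal.one_lt_top, ENNReal.coe_lt_top⟩).ne)
  -- the constant
  refine ⟨K * ∑ V ∈ S.powerset, ∫⁻ x : ℝ, ∏ j ∈ V ∪ Sᶜ, ((‖x - b j‖₊ : ℝ≥0∞)) ^ (-p), ?_, ?_⟩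
  · refine ENNReal.mul_lt_top hKtop (ENNReal.sum_lt_top.2 fun V hV => ?_)
    apply lemA b hb hp0 hp1
    have hc1 : Sᶜ.card ≤ (V ∪ Sᶜ).card := Finset.card_le_card Finset.subset_union_right
    have hc2 : Sᶜ.card = m - s := by
      rw [Finset.card_compl, hScard, Fintype.card_fin]
    have hms : ((m - s : ℕ) : ℝ) = (m : ℝ) - (s : ℝ) := by
      rw [Nat.cast_sub (by omega)]
    calc (1 : ℝ) < ((m : ℝ) - L) * p := hml
      _ ≤ ((m : ℝ) - s) * p := by
          have : (s : ℝ) ≤ (L : ℝ) := by exact_mod_cast hs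
          nlinarith
      _ ≤ ((V ∪ Sᶜ).card : ℝ) * p := by
          have : ((m - s : ℕ) : ℝ) ≤ ((V ∪ Sᶜ).card : ℝ) := by
            exact_mod_cast hc2 ▸ hc1
          rw [← hms] at *
          nlinarith
  · intro t
    set W : ℝ → ℂ := fun x => (x : ℂ) + (t : ℂ) * Complex.I with hW
    have hpt : ∀ x : ℝ,
        ((‖W x‖₊ : ℝ≥0∞)) ^ ((s : ℝ) * p) * ∏ j : Fin m, ((‖W x - (b j : ℂ)‖₊ : ℝ≥0∞)) ^ (-p)
        ≤ K * ∑ V ∈ S.powerset, ∏ j ∈ V ∪ Sᶜ, ((‖W x - (b j : ℂ)‖₊ : ℝ≥0∞)) ^ (-p) := by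
      intro x
      set U : Fin m → ℝ≥0∞ := fun j => ((‖W x - (b j : ℂ)‖₊ : ℝ≥0∞)) with hU
      have hUtop : ∀ j, U j ≠ ⊤ := fun j => ENNReal.coe_ne_top
      -- numerator bound
      have hnum : ((‖W x‖₊ : ℝ≥0∞)) ^ ((s : ℝ) * p)
          ≤ K * ∏ j ∈ S, (1 + (U j) ^ p) := by
        have h1 : ∀ j, ((‖W x‖₊ : ℝ≥0∞)) ≤ (1 + (‖b j‖₊ : ℝ≥0∞)) * (1 + U j) := by
          intro j
          have h2 : ((‖W x‖₊ : ℝ≥0∞)) ≤ U j + (‖b j‖₊ : ℝ≥0∞) := by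
            have : W x = (W x - (b j : ℂ)) + (b j : ℂ) := by ring
            calc ((‖W x‖₊ : ℝ≥0∞)) = (‖(W x - (b j : ℂ)) + (b j : ℂ)‖₊ : ℝ≥0∞) := by rw [← this]
              _ ≤ _ := by
                  rw [← ENNReal.coe_add, ENNReal.coe_le_coe]
                  exact le_trans (nnnorm_add_le _ _) (by rw [Complex.nnnorm_real])
          calc ((‖W x‖₊ : ℝ≥0∞)) ≤ U j + (‖b j‖₊ : ℝ≥0∞) := h2
            _ ≤ (U j + (‖b j‖₊ : ℝ≥0∞)) + (1 + (‖b j‖₊ : ℝ≥0∞) * U j) := le_self_add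
            _ = (1 + (‖b j‖₊ : ℝ≥0∞)) * (1 + U j) := by ring
        calc ((‖W x‖₊ : ℝ≥0∞)) ^ ((s : ℝ) * p)
            = ∏ _j ∈ S, ((‖W x‖₊ : ℝ≥0∞)) ^ p := by
              rw [Finset.prod_const, hScard, ← ENNReal.rpow_natCast (_ ^ p), ← ENNReal.rpow_mul,
                mul_comm]
          _ ≤ ∏ j ∈ S, ((1 + (‖b j‖₊ : ℝ≥0∞)) * (1 + U j)) ^ p :=
              Finset.prod_le_prod' fun j _ => ENNReal.rpow_le_rpow (h1 j) hp0.le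
          _ = ∏ j ∈ S, ((1 + (‖b j‖₊ : ℝ≥0∞)) ^ p * (1 + U j) ^ p) :=
              Finset.prod_congr rfl fun j _ => ENNReal.mul_rpow_of_ne_top
                (by exact (ENNReal.add_lt_top.2 ⟨ENNReal.one_lt_top, ENNReal.coe_lt_top⟩).ne)
                (by exact (ENNReal.add_lt_top.2 ⟨ENNReal.one_lt_top, ENNReal.coe_lt_top⟩).ne) p
          _ = K * ∏ j ∈ S, (1 + U j) ^ p := by rw [Finset.prod_mul_distrib]
          _ ≤ K * ∏ j ∈ S, (1 + (U j) ^ p) := by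
              gcongr with j hj
              calc (1 + U j) ^ p ≤ 1 ^ p + (U j) ^ p :=
                  ENNReal.rpow_add_le_add_rpow _ _ hp0.le hp1.le
                _ = 1 + (U j) ^ p := by rw [ENNReal.one_rpow]
      calc ((‖W x‖₊ : ℝ≥0∞)) ^ ((s : ℝ) * p) * ∏ j : Fin m, (U j) ^ (-p)
          ≤ (K * ∏ j ∈ S, (1 + (U j) ^ p)) * ∏ j : Fin m, (U j) ^ (-p) :=
            mul_le_mul' hnum le_rfl
        _ = K * ((∏ j ∈ S, ((1 + (U j) ^ p) * (U j) ^ (-p))) * ∏ j ∈ Sᶜ, (U j) ^ (-p)) := by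
            rw [← Finset.prod_mul_prod_compl S (fun j => (U j) ^ (-p)), Finset.prod_mul_distrib]
            ring
        _ ≤ K * ((∏ j ∈ S, ((U j) ^ (-p) + 1)) * ∏ j ∈ Sᶜ, (U j) ^ (-p)) := by
            have hfac : ∀ j ∈ S, (1 + (U j) ^ p) * (U j) ^ (-p) ≤ (U j) ^ (-p) + 1 := by
              intro j hj
              have heq : (1 + (U j) ^ p) * (U j) ^ (-p)
                  = (U j) ^ (-p) + (U j) ^ p * (U j) ^ (-p) := by ring
              rw [heq]
              gcongr
              rw [ENNReal.rpow_neg, ← div_eq_mul_inv]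
              exact ENNReal.div_self_le_one
            exact mul_le_mul' le_rfl (mul_le_mul' (Finset.prod_le_prod' hfac) le_rfl)
        _ = K * ∑ V ∈ S.powerset, ∏ j ∈ V ∪ Sᶜ, (U j) ^ (-p) := by
            congr 1
            rw [Finset.prod_add, Finset.sum_mul]
            apply Finset.sum_congr rfl
            intro V hV
            rw [Finset.prod_const_one, mul_one, ← Finset.prod_union]
            exact Disjoint.mono_left (Finset.mem_powerset.1 hV) disjoint_compl_right
    calc ∫⁻ x : ℝ, ((‖W x‖₊ : ℝ≥0∞)) ^ ((s : ℝ) * p)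
          * ∏ j : Fin m, ((‖W x - (b j : ℂ)‖₊ : ℝ≥0∞)) ^ (-p)
        ≤ ∫⁻ x : ℝ, K * ∑ V ∈ S.powerset, ∏ j ∈ V ∪ Sᶜ, ((‖W x - (b j : ℂ)‖₊ : ℝ≥0∞)) ^ (-p) :=
          lintegral_mono hpt
      _ ≤ K * ∑ V ∈ S.powerset, ∫⁻ x : ℝ, ∏ j ∈ V ∪ Sᶜ, ((‖x - b j‖₊ : ℝ≥0∞)) ^ (-p) := by
          rw [lintegral_const_mul' _ _ hKtop.ne]
          gcongr with V hV
          calc ∫⁻ x : ℝ, ∑ V ∈ S.powerset, ∏ j ∈ V ∪ Sᶜ, ((‖W x - (b j : ℂ)‖₊ : ℝ≥0∞)) ^ (-p)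
              ≤ ∫⁻ x : ℝ, ∑ V ∈ S.powerset, ∏ j ∈ V ∪ Sᶜ, ((‖x - b j‖₊ : ℝ≥0∞)) ^ (-p) := by
                apply lintegral_mono
                intro x
                apply Finset.sum_le_sum
                intro V hV
                apply Finset.prod_le_prod'
                intro j hj
                apply rpow_neg_le_rpow_neg hp0.le
                have hre : |x - b j| ≤ ‖W x - (b j : ℂ)‖ := by
                  have hrr : (W x - (b j : ℂ)).re = x - b j := by
                    simp [hW, Complex.add_re, Complex.sub_re, Complex.mul_re]
                  rw [← hrr]
                  exact Complex.abs_re_le_norm _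
                rw [ennnorm_eq_ofReal_abs']
                refine le_trans (ENNReal.ofReal_le_ofReal hre) ?_
                exact le_of_eq (ofReal_norm _)
              _ = ∑ V ∈ S.powerset, ∫⁻ x : ℝ, ∏ j ∈ V ∪ Sᶜ, ((‖x - b j‖₊ : ℝ≥0∞)) ^ (-p) := by
                apply lintegral_finset_sum
                intro V hV
                exact Finset.measurable_prod _ fun j _ => meas_fac (b j) p

private lemma lintegral_pi_prod {n : ℕ} (f : Fin n → ℝ → ℝ≥0∞) (hf : ∀ i, Measurable (f i)) :
    ∫⁻ x : Fin n → ℝ, ∏ i, f i (x i) = ∏ i, ∫⁻ t : ℝ, f i t := by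
  induction n with
  | zero => simp [volume_pi]
  | succ n ih =>
    have hmp := measurePreserving_piFinSuccAbove (fun _ : Fin (n+1) => (volume : Measure ℝ)) 0
    have key : ∫⁻ z : ℝ × (Fin n → ℝ), (f 0 z.1 * ∏ j : Fin n, f j.succ (z.2 j))
        ∂((volume : Measure ℝ).prod (Measure.pi fun _ => volume))
        = ∫⁻ x : Fin (n+1) → ℝ, ∏ i, f i (x i) := by
      rw [← hmp.map_eq, ← volume_pi, lintegral_map_equiv]
      refine lintegral_congr fun x => ?_
      rw [Fin.prod_univ_succ]
      simp [MeasurableEquiv.piFinSuccAbove, Fin.zero_succAbove, Fin.tail]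
    have hg : Measurable (fun w : Fin n → ℝ => ∏ j : Fin n, f j.succ (w j)) :=
      Finset.measurable_prod _ fun j _ => (hf j.succ).comp (measurable_pi_apply j)
    rw [← key, lintegral_prod_mul (μ := (volume : Measure ℝ)) (ν := Measure.pi fun _ => volume)
      (f := f 0) (g := fun w : Fin n → ℝ => ∏ j : Fin n, f j.succ (w j))
      (hf 0).aemeasurable hg.aemeasurable]
    rw [volume_pi] at ih
    rw [ih (fun j => f j.succ) (fun j => hf j.succ), Fin.prod_univ_succ]

private lemma prod_rpow_ne_top {ι : Type*} (s : Finset ι) (f : ι → ℝ≥0∞)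
    (hf : ∀ i ∈ s, f i ≠ ⊤) (q : ℝ) : (∏ i ∈ s, f i) ^ q = ∏ i ∈ s, (f i) ^ q := by
  induction s using Finset.cons_induction with
  | empty => simp [ENNReal.one_rpow]
  | cons a s ha ih =>
    rw [Finset.prod_cons, Finset.prod_cons,
      ENNReal.mul_rpow_of_ne_top (hf a (Finset.mem_cons_self a s))
        (ENNReal.prod_lt_top fun i hi => lt_top_iff_ne_top.2
          (hf i (Finset.mem_cons_of_mem hi))).ne,
      ih fun i hi => hf i (Finset.mem_cons_of_mem hi)]

private lemma differentiable_mvpoly {n : ℕ} (P : MvPolynomial (Fin n) ℂ) :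
    Differentiable ℂ (fun z : Fin n → ℂ => MvPolynomial.eval z P) := by
  apply MvPolynomial.induction_on P (fun a => by simpa using differentiable_const (𝕜 := ℂ) a)
    (fun p q hp hq => by simp only [MvPolynomial.eval_add]; exact hp.add hq)
    (fun p i hp => ?_)
  simp only [MvPolynomial.eval_mul, MvPolynomial.eval_X]
  exact hp.mul (ContinuousLinearMap.proj (R := ℂ) (φ := fun _ : Fin n => ℂ) i).differentiable

private lemma ae_off_poles (n m : ℕ) (a : Fin n → Fin m → ℝ) :
    ∀ᵐ x ∂(volume : Measure (Fin n → ℝ)), ∀ k j, x k ≠ a k j := by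
  have h1 : ∀ (k : Fin n) (j : Fin m), (volume : Measure (Fin n → ℝ)) {x | x k = a k j} = 0 := by
    intro k j
    have hset : {x : Fin n → ℝ | x k = a k j}
        = Set.univ.pi (fun i => if i = k then ({a k j} : Set ℝ) else Set.univ) := by
      ext x
      simp only [Set.mem_setOf_eq, Set.mem_pi, Set.mem_univ, forall_true_left]
      constructor
      · intro h i
        by_cases hik : i = k
        · subst hik; simp [h]
        · simp [hik]
      · intro h
        have := h k
        simpa using this
    rw [hset, volume_pi_pi]
    apply Finset.prod_eq_zero (Finset.mem_univ k)
    simp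
  have hsub : {x : Fin n → ℝ | ¬ ∀ k j, x k ≠ a k j} ⊆ ⋃ k, ⋃ j, {x | x k = a k j} := by
    intro x hx
    simp only [Set.mem_setOf_eq, not_forall, not_not] at hx
    obtain ⟨k, j, h⟩ := hx
    exact Set.mem_iUnion.2 ⟨k, Set.mem_iUnion.2 ⟨j, h⟩⟩
  exact ae_iff.2 (measure_mono_null hsub
    (measure_iUnion_null fun k => measure_iUnion_null fun j => h1 k j))


private lemma meas_g1 (c : ℝ) (q : ℝ) :
    Measurable fun u : ℝ => ((‖(u : ℂ) + (c : ℂ) * Complex.I‖₊ : ℝ≥0∞)) ^ q :=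
  (ENNReal.continuous_rpow_const.comp (ENNReal.continuous_coe.comp
    ((Complex.continuous_ofReal.add continuous_const).nnnorm))).measurable

private lemma meas_g2 (c b : ℝ) (q : ℝ) :
    Measurable fun u : ℝ => ((‖(u : ℂ) + (c : ℂ) * Complex.I - (b : ℂ)‖₊ : ℝ≥0∞)) ^ q :=
  (ENNReal.continuous_rpow_const.comp (ENNReal.continuous_coe.comp
    (((Complex.continuous_ofReal.add continuous_const).sub continuous_const).nnnorm))).measurable

private lemma mainBound {n : ℕ} {p : ℝ} (hp0 : 0 < p) (hp1 : p < 1) (m : ℕ) (l : Fin n → ℕ)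
    (P : MvPolynomial (Fin n) ℂ) (hdeg : ∀ k, P.degreeOf k ≤ l k)
    (hml : 1 < ((m : ℝ) - ((Finset.univ.sup l : ℕ) : ℝ)) * p)
    (a : Fin n → Fin m → ℝ) (ha : ∀ k, Function.Injective (a k)) :
    ∃ C : ℝ≥0∞, C < ⊤ ∧ ∀ y : Fin n → ℝ,
      (∫⁻ x : Fin n → ℝ, (‖MvPolynomial.eval (cpt n x y) P
        / ∏ k, ∏ j, (cpt n x y k - (a k j : ℂ))‖₊ : ℝ≥0∞) ^ p) ≤ C := by
  set L : ℕ := Finset.univ.sup l with hLdef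
  have hC1 : ∀ (k : Fin n) (s0 : ℕ), s0 ≤ L → ∃ C : ℝ≥0∞, C < ⊤ ∧ ∀ t : ℝ, (∫⁻ x : ℝ,
      ((‖(x : ℂ) + (t : ℂ) * Complex.I‖₊ : ℝ≥0∞)) ^ ((s0 : ℝ) * p)
      * ∏ j : Fin m, ((‖(x : ℂ) + (t : ℂ) * Complex.I - (a k j : ℂ)‖₊ : ℝ≥0∞)) ^ (-p)) ≤ C :=
    fun k s0 hs0 => oneVar (a k) (ha k) hp0 hp1 L hml s0 hs0
  classical
  let C1 : Fin n → ℕ → ℝ≥0∞ := fun k s0 => if h : s0 ≤ L then (hC1 k s0 h).choose else 0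
  have hC1top : ∀ k s0, C1 k s0 < ⊤ := by
    intro k s0
    by_cases h : s0 ≤ L
    · simp only [C1, dif_pos h]; exact (hC1 k s0 h).choose_spec.1
    · simp [C1, dif_neg h]
  have hC1bound : ∀ (k : Fin n) (s0 : ℕ) (_ : s0 ≤ L) (t : ℝ), (∫⁻ x : ℝ,
      ((‖(x : ℂ) + (t : ℂ) * Complex.I‖₊ : ℝ≥0∞)) ^ ((s0 : ℝ) * p)
      * ∏ j : Fin m, ((‖(x : ℂ) + (t : ℂ) * Complex.I - (a k j : ℂ)‖₊ : ℝ≥0∞)) ^ (-p))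
      ≤ C1 k s0 := by
    intro k s0 h t
    simp only [C1, dif_pos h]
    exact (hC1 k s0 h).choose_spec.2 t
  refine ⟨∑ d ∈ P.support, ((‖MvPolynomial.coeff d P‖₊ : ℝ≥0∞)) ^ p * ∏ k, C1 k (d k), ?_, ?_⟩
  · exact ENNReal.sum_lt_top.2 fun d _ => ENNReal.mul_lt_top
      (ENNReal.rpow_lt_top_of_nonneg hp0.le ENNReal.coe_ne_top)
      (ENNReal.prod_lt_top fun k _ => hC1top k (d k))
  intro y
  have hpt : ∀ x : Fin n → ℝ,
      (‖MvPolynomial.eval (cpt n x y) P / ∏ k, ∏ j, (cpt n x y k - (a k j : ℂ))‖₊ : ℝ≥0∞) ^ p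
      ≤ ∑ d ∈ P.support, ((‖MvPolynomial.coeff d P‖₊ : ℝ≥0∞)) ^ p
          * ∏ k, (((‖cpt n x y k‖₊ : ℝ≥0∞)) ^ ((d k : ℝ) * p)
              * ∏ j, ((‖cpt n x y k - (a k j : ℂ)‖₊ : ℝ≥0∞)) ^ (-p)) := by
    intro x
    set z := cpt n x y with hz
    by_cases hden0 : (∏ k, ∏ j, (z k - (a k j : ℂ))) = 0
    · rw [hden0, div_zero]
      simp only [nnnorm_zero, ENNReal.coe_zero]
      rw [ENNReal.zero_rpow_of_pos hp0]
      exact zero_le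
    have h1 : (‖MvPolynomial.eval z P / ∏ k, ∏ j, (z k - (a k j : ℂ))‖₊ : ℝ≥0∞) ^ p
        = ((‖MvPolynomial.eval z P‖₊ : ℝ≥0∞)) ^ p
          * ∏ k, ∏ j, ((‖z k - (a k j : ℂ)‖₊ : ℝ≥0∞)) ^ (-p) := by
      have hdnn : ‖∏ k, ∏ j, (z k - (a k j : ℂ))‖₊ ≠ 0 := nnnorm_ne_zero_iff.2 hden0
      rw [nnnorm_div, ENNReal.coe_div hdnn, ENNReal.div_rpow_of_nonneg _ _ hp0.le,
        div_eq_mul_inv, ← ENNReal.rpow_neg]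
      congr 1
      rw [nnnorm_prod, ENNReal.coe_finset_prod,
        prod_rpow_ne_top _ _ (fun k _ => ENNReal.coe_ne_top) (-p)]
      refine Finset.prod_congr rfl fun k _ => ?_
      rw [nnnorm_prod, ENNReal.coe_finset_prod,
        prod_rpow_ne_top _ _ (fun j _ => ENNReal.coe_ne_top) (-p)]
    have h2 : ((‖MvPolynomial.eval z P‖₊ : ℝ≥0∞)) ^ p
        ≤ ∑ d ∈ P.support, ((‖MvPolynomial.coeff d P‖₊ : ℝ≥0∞)) ^ p
            * ∏ k, ((‖z k‖₊ : ℝ≥0∞)) ^ ((d k : ℝ) * p) := by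
      have hnn : (‖MvPolynomial.eval z P‖₊ : ℝ≥0∞)
          ≤ ∑ d ∈ P.support, (‖MvPolynomial.coeff d P‖₊ : ℝ≥0∞)
              * ∏ k, ((‖z k‖₊ : ℝ≥0∞)) ^ (d k) := by
        rw [MvPolynomial.eval_eq']
        calc ((‖∑ d ∈ P.support, MvPolynomial.coeff d P * ∏ i, z i ^ d i‖₊ : ℝ≥0∞))
            ≤ ∑ d ∈ P.support, (‖MvPolynomial.coeff d P * ∏ i, z i ^ d i‖₊ : ℝ≥0∞) := by
              rw [← ENNReal.coe_finset_sum]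
              exact_mod_cast nnnorm_sum_le _ _
          _ = ∑ d ∈ P.support, (‖MvPolynomial.coeff d P‖₊ : ℝ≥0∞)
              * ∏ k, ((‖z k‖₊ : ℝ≥0∞)) ^ (d k) := by
              refine Finset.sum_congr rfl fun d _ => ?_
              rw [nnnorm_mul, nnnorm_prod, ENNReal.coe_mul, ENNReal.coe_finset_prod]
              congr 1
              exact Finset.prod_congr rfl fun k _ => by rw [nnnorm_pow, ENNReal.coe_pow]
      calc ((‖MvPolynomial.eval z P‖₊ : ℝ≥0∞)) ^ p
          ≤ (∑ d ∈ P.support, (‖MvPolynomial.coeff d P‖₊ : ℝ≥0∞)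
              * ∏ k, ((‖z k‖₊ : ℝ≥0∞)) ^ (d k)) ^ p := ENNReal.rpow_le_rpow hnn hp0.le
        _ ≤ ∑ d ∈ P.support, ((‖MvPolynomial.coeff d P‖₊ : ℝ≥0∞)
              * ∏ k, ((‖z k‖₊ : ℝ≥0∞)) ^ (d k)) ^ p := enn_sum_rpow_le _ _ hp0 hp1.le
        _ = ∑ d ∈ P.support, ((‖MvPolynomial.coeff d P‖₊ : ℝ≥0∞)) ^ p
              * ∏ k, ((‖z k‖₊ : ℝ≥0∞)) ^ ((d k : ℝ) * p) := by
            refine Finset.sum_congr rfl fun d _ => ?_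
            rw [ENNReal.mul_rpow_of_ne_top ENNReal.coe_ne_top
              (ENNReal.prod_lt_top fun k _ => (by
                exact ENNReal.pow_lt_top ENNReal.coe_lt_top)).ne,
              prod_rpow_ne_top _ _ (fun k _ => (ENNReal.pow_lt_top ENNReal.coe_lt_top).ne) p]
            congr 1
            refine Finset.prod_congr rfl fun k _ => ?_
            rw [← ENNReal.rpow_natCast ((‖z k‖₊ : ℝ≥0∞)) (d k), ← ENNReal.rpow_mul]
    rw [h1]
    refine le_trans (mul_le_mul' h2 le_rfl) ?_
    rw [Finset.sum_mul]
    refine le_of_eq (Finset.sum_congr rfl fun d _ => ?_)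
    rw [mul_assoc, ← Finset.prod_mul_distrib]
  calc (∫⁻ x : Fin n → ℝ, (‖MvPolynomial.eval (cpt n x y) P
        / ∏ k, ∏ j, (cpt n x y k - (a k j : ℂ))‖₊ : ℝ≥0∞) ^ p)
      ≤ ∫⁻ x : Fin n → ℝ, ∑ d ∈ P.support, ((‖MvPolynomial.coeff d P‖₊ : ℝ≥0∞)) ^ p
          * ∏ k, (((‖cpt n x y k‖₊ : ℝ≥0∞)) ^ ((d k : ℝ) * p)
              * ∏ j, ((‖cpt n x y k - (a k j : ℂ)‖₊ : ℝ≥0∞)) ^ (-p)) := lintegral_mono hpt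
    _ = ∑ d ∈ P.support, ((‖MvPolynomial.coeff d P‖₊ : ℝ≥0∞)) ^ p
          * ∫⁻ x : Fin n → ℝ, ∏ k, (((‖cpt n x y k‖₊ : ℝ≥0∞)) ^ ((d k : ℝ) * p)
              * ∏ j, ((‖cpt n x y k - (a k j : ℂ)‖₊ : ℝ≥0∞)) ^ (-p)) := by
        rw [lintegral_finset_sum]
        · exact Finset.sum_congr rfl fun d _ => lintegral_const_mul' _ _
            (ENNReal.rpow_lt_top_of_nonneg hp0.le ENNReal.coe_ne_top).ne
        · intro d _
          apply Measurable.const_mul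
          apply Finset.measurable_prod
          intro k _
          apply Measurable.mul
          · exact (meas_g1 (y k) ((d k : ℝ) * p)).comp (measurable_pi_apply k)
          · apply Finset.measurable_prod
            intro j _
            exact (meas_g2 (y k) (a k j) (-p)).comp (measurable_pi_apply k)
    _ ≤ ∑ d ∈ P.support, ((‖MvPolynomial.coeff d P‖₊ : ℝ≥0∞)) ^ p * ∏ k, C1 k (d k) := by
        refine Finset.sum_le_sum fun d hd => mul_le_mul' le_rfl ?_
        have hfact : (∫⁻ x : Fin n → ℝ, ∏ k, (((‖cpt n x y k‖₊ : ℝ≥0∞)) ^ ((d k : ℝ) * p)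
            * ∏ j, ((‖cpt n x y k - (a k j : ℂ)‖₊ : ℝ≥0∞)) ^ (-p)))
            = ∏ k, ∫⁻ u : ℝ, (((‖(u : ℂ) + (y k : ℂ) * Complex.I‖₊ : ℝ≥0∞)) ^ ((d k : ℝ) * p)
              * ∏ j, ((‖(u : ℂ) + (y k : ℂ) * Complex.I - (a k j : ℂ)‖₊ : ℝ≥0∞)) ^ (-p)) := by
          exact lintegral_pi_prod (fun k u =>
            ((‖(u : ℂ) + (y k : ℂ) * Complex.I‖₊ : ℝ≥0∞)) ^ ((d k : ℝ) * p)
              * ∏ j, ((‖(u : ℂ) + (y k : ℂ) * Complex.I - (a k j : ℂ)‖₊ : ℝ≥0∞)) ^ (-p))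
            (fun k => ((meas_g1 (y k) ((d k : ℝ) * p)).mul
              (Finset.measurable_prod _ fun j _ => meas_g2 (y k) (a k j) (-p))))
        rw [hfact]
        refine Finset.prod_le_prod' fun k _ => ?_
        have hdk : d k ≤ L := by
          refine le_trans (le_trans ?_ (hdeg k)) (Finset.le_sup (Finset.mem_univ k))
          rw [MvPolynomial.degreeOf_eq_sup]
          exact Finset.le_sup (f := fun e => e k) hd
        exact hC1bound k (d k) hdk (y k)


/-- Rational atoms: if `(m-l)p > 1` with `l = max_k deg_k P`, the
`a_{k1},…,a_{km}` are pairwise distinct reals, and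
`R(z) = P(z)/∏_{k,j}(z_k - a_{kj})`, `f = R|_{ℝ^n}`, then `f ∈ L^p(ℝ^n)` and, for every
sign vector `σ`, `R` is holomorphic on `T_{Γ_σ}`, belongs to `H^p(T_{Γ_σ})`, and has
non-tangential boundary limit `f(x)` at a.e. `x ∈ ℝ^n`; hence
`f ∈ ⋂_σ H^p_σ(ℝ^n)`. -/
theorem statement17 (n : ℕ) (p : ℝ) (hp0 : 0 < p) (hp1 : p < 1)
    (m : ℕ) (l : Fin n → ℕ) (P : MvPolynomial (Fin n) ℂ)
    (hdeg : ∀ k, P.degreeOf k ≤ l k)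
    (hml : 1 < ((m : ℝ) - (Finset.univ.sup l : ℕ)) * p)
    (a : Fin n → Fin m → ℝ) (ha : ∀ k, Function.Injective (a k))
    (R : (Fin n → ℂ) → ℂ)
    (hRdef : ∀ z : Fin n → ℂ, (∀ k j, z k ≠ (a k j : ℂ)) →
      R z = MvPolynomial.eval z P / ∏ k, ∏ j, (z k - (a k j : ℂ)))
    (f : (Fin n → ℝ) → ℂ) (hf : ∀ x, f x = R (rpt n x)) :
    MemLp' n p f ∧
    ∀ σ : Fin n → Bool,
      MemHp n p (octant n σ) R ∧
      (∀ᵐ x ∂(volume : Measure (Fin n → ℝ)), NTBLAt n σ R x (f x)) ∧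
      HpBdry n p σ f := by
  classical
  obtain ⟨C, hCtop, hCbound⟩ := mainBound hp0 hp1 m l P hdeg hml a ha
  have hae := ae_off_poles n m a
  have hnum : Differentiable ℂ fun z : Fin n → ℂ => MvPolynomial.eval z P :=
    differentiable_mvpoly P
  have hden : Differentiable ℂ fun z : Fin n → ℂ => ∏ k, ∏ j, (z k - (a k j : ℂ)) := by
    have hexp : (fun z : Fin n → ℂ => ∏ k, ∏ j, (z k - (a k j : ℂ)))
        = fun z => MvPolynomial.eval z
          (∏ k, ∏ j, (MvPolynomial.X k - MvPolynomial.C ((a k j : ℂ)))) := by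
      funext z
      rw [map_prod]
      refine Finset.prod_congr rfl fun k _ => ?_
      rw [map_prod]
      refine Finset.prod_congr rfl fun j _ => ?_
      rw [map_sub, MvPolynomial.eval_X, MvPolynomial.eval_C]
    rw [hexp]
    exact differentiable_mvpoly _
  have hrptcont : Continuous (rpt n) :=
    continuous_pi fun j => Complex.continuous_ofReal.comp (continuous_apply j)
  have hgood_rpt : ∀ x : Fin n → ℝ, (∀ k j, x k ≠ a k j) →
      ∀ k j, rpt n x k ≠ (a k j : ℂ) := by
    intro x hx k j h
    exact hx k j (Complex.ofReal_inj.1 h)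
  have htube : ∀ (σ : Fin n → Bool), ∀ z ∈ tube n (octant n σ), ∀ k j, z k ≠ (a k j : ℂ) := by
    intro σ z hz k j hc
    have h1 := hz k
    simp only at h1
    rw [hc, Complex.ofReal_im, mul_zero] at h1
    exact lt_irrefl 0 h1
  have hcpt0 : ∀ x : Fin n → ℝ, cpt n x 0 = rpt n x := by
    intro x; funext j; simp [cpt, rpt]
  have hfG : ∀ᵐ x ∂(volume : Measure (Fin n → ℝ)), f x = MvPolynomial.eval (rpt n x) P
      / ∏ k, ∏ j, (rpt n x k - (a k j : ℂ)) := by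
    filter_upwards [hae] with x hx
    rw [hf x, hRdef _ (hgood_rpt x hx)]
  constructor
  · constructor
    · have hmeasG : Measurable fun x : Fin n → ℝ =>
          MvPolynomial.eval (rpt n x) P / ∏ k, ∏ j, (rpt n x k - (a k j : ℂ)) :=
        ((hnum.continuous.comp hrptcont).measurable).div
          ((hden.continuous.comp hrptcont).measurable)
      exact hmeasG.aemeasurable.congr (hfG.mono fun x hx => hx.symm)
    · have heq : lpNorm n p f = ∫⁻ x : Fin n → ℝ, (‖MvPolynomial.eval (cpt n x 0) P
          / ∏ k, ∏ j, (cpt n x 0 k - (a k j : ℂ))‖₊ : ℝ≥0∞) ^ p := by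
        refine lintegral_congr_ae ?_
        filter_upwards [hfG] with x hx
        rw [hcpt0 x, hx]
      rw [heq]
      exact lt_of_le_of_lt (hCbound 0) hCtop
  · intro σ
    have hoct_ne : ∀ y ∈ octant n σ, ∀ k, y k ≠ 0 := by
      intro y hy k h0
      have h1 := hy k
      rw [h0, mul_zero] at h1
      exact lt_irrefl 0 h1
    have hdiff : DifferentiableOn ℂ R (tube n (octant n σ)) := by
      have hGdiff : DifferentiableOn ℂ (fun z : Fin n → ℂ => MvPolynomial.eval z P
          / ∏ k, ∏ j, (z k - (a k j : ℂ))) (tube n (octant n σ)) := by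
        have hne : ∀ z ∈ tube n (octant n σ), (∏ k, ∏ j, (z k - (a k j : ℂ))) ≠ 0 :=
          fun z hz => Finset.prod_ne_zero_iff.2 fun k _ => Finset.prod_ne_zero_iff.2 fun j _ =>
            sub_ne_zero.2 (htube σ z hz k j)
        simp only [div_eq_mul_inv]
        exact hnum.differentiableOn.mul (hden.differentiableOn.inv hne)
      exact hGdiff.congr fun z hz => hRdef z (htube σ z hz)
    have hhn : hNorm n p (octant n σ) R < ⊤ := by
      refine lt_of_le_of_lt ?_ hCtop
      simp only [hNorm]
      refine iSup₂_le fun y hy => ?_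
      have hRcpt : ∀ x : Fin n → ℝ, R (cpt n x y) = MvPolynomial.eval (cpt n x y) P
          / ∏ k, ∏ j, (cpt n x y k - (a k j : ℂ)) := by
        intro x
        apply hRdef
        intro k j hc
        have h1 : (cpt n x y k).im = y k := by simp [cpt]
        exact hoct_ne y hy k (by rw [← h1, hc, Complex.ofReal_im])
      calc ∫⁻ x : Fin n → ℝ, (‖R (cpt n x y)‖₊ : ℝ≥0∞) ^ p
          = ∫⁻ x : Fin n → ℝ, (‖MvPolynomial.eval (cpt n x y) P
              / ∏ k, ∏ j, (cpt n x y k - (a k j : ℂ))‖₊ : ℝ≥0∞) ^ p :=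
            lintegral_congr fun x => by rw [hRcpt x]
        _ ≤ C := hCbound y
    have hNT : ∀ᵐ x ∂(volume : Measure (Fin n → ℝ)), NTBLAt n σ R x (f x) := by
      filter_upwards [hae] with x hx
      intro α hα
      have hzden : (∏ k, ∏ j, (rpt n x k - (a k j : ℂ))) ≠ 0 :=
        Finset.prod_ne_zero_iff.2 fun k _ => Finset.prod_ne_zero_iff.2 fun j _ =>
          sub_ne_zero.2 (hgood_rpt x hx k j)
      have hGc : ContinuousAt (fun z : Fin n → ℂ => MvPolynomial.eval z P
          / ∏ k, ∏ j, (z k - (a k j : ℂ))) (rpt n x) :=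
        (hnum.continuous.continuousAt).div (hden.continuous.continuousAt) hzden
      have hfx : f x = MvPolynomial.eval (rpt n x) P
          / ∏ k, ∏ j, (rpt n x k - (a k j : ℂ)) := by
        rw [hf x, hRdef _ (hgood_rpt x hx)]
      rw [hfx]
      refine Filter.Tendsto.congr' ?_ (tendsto_nhdsWithin_of_tendsto_nhds hGc)
      filter_upwards [self_mem_nhdsWithin] with z hz
      exact (hRdef z (htube σ z hz.1)).symm
    exact ⟨⟨hdiff, hhn⟩, hNT, ⟨R, ⟨hdiff, hhn⟩, hNT⟩⟩


end
end
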